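/- arXiv:0912.1999 — 7 statements merged into one kernel-verified Lean document; each statement's English description precedes it below -/
import Mathlib

section
/- Let μ be a positive integer and a, b nonnegative integers with a ≥ μb. Among all sequences of a votes for A and b votes for B, the probability that a_r ≥ μ·b_r for all r equals (a - μb + 1)/(a + 1). -/
/-- Number of A-votes (true) among the first `r` positions. -/
def countA (n : ℕ) (v : Fin n → Bool) (r : ℕ) : ℕ :=
  (Finset.univ.filter (fun i : Fin n => i.val < r ∧ v i = true)).card

/-- Number of B-votes (false) among the first `r` positions. -/
def countB (n : ℕ) (v : Fin n → Bool) (r : ℕ) : ℕ :=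
  (Finset.univ.filter (fun i : Fin n => i.val < r ∧ v i = false)).card

open Finset

lemma countA_eq_sum (n : ℕ) (v : Fin n → Bool) (r : ℕ) :
    countA n v r = ∑ i : Fin n, if i.val < r ∧ v i = true then 1 else 0 :=
  Finset.card_filter _ _

lemma countB_eq_sum (n : ℕ) (v : Fin n → Bool) (r : ℕ) :
    countB n v r = ∑ i : Fin n, if i.val < r ∧ v i = false then 1 else 0 :=
  Finset.card_filter _ _

lemma countA_snoc (m : ℕ) (u : Fin m → Bool) (x : Bool) {r : ℕ} (h : r ≤ m) :
    countA (m+1) (Fin.snoc u x) r = countA m u r := by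
  rw [countA_eq_sum, countA_eq_sum, Fin.sum_univ_castSucc]
  have h1 : ¬ ((Fin.last m).val < r) := by simp [Fin.last]; omega
  simp only [Fin.snoc_castSucc, Fin.snoc_last, Fin.coe_castSucc, h1, false_and, if_false,
    add_zero]

lemma countB_snoc (m : ℕ) (u : Fin m → Bool) (x : Bool) {r : ℕ} (h : r ≤ m) :
    countB (m+1) (Fin.snoc u x) r = countB m u r := by
  rw [countB_eq_sum, countB_eq_sum, Fin.sum_univ_castSucc]
  have h1 : ¬ ((Fin.last m).val < r) := by simp [Fin.last]; omega
  simp only [Fin.snoc_castSucc, Fin.snoc_last, Fin.coe_castSucc, h1, false_and, if_false,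
    add_zero]

lemma countA_snoc_total (m : ℕ) (u : Fin m → Bool) (x : Bool) :
    countA (m+1) (Fin.snoc u x) (m+1) = countA m u m + (if x = true then 1 else 0) := by
  rw [countA_eq_sum, countA_eq_sum, Fin.sum_univ_castSucc]
  have h1 : ((Fin.last m).val < m + 1) := by simp [Fin.last]
  congr 1
  · apply Finset.sum_congr rfl
    intro i _
    have h2 : (i.castSucc).val < m + 1 := by
      simp only [Fin.coe_castSucc]; omega
    have h3 : i.val < m := i.isLt
    simp [Fin.snoc_castSucc, h2, h3, Nat.lt_succ_of_lt h3]
  · simp [Fin.snoc_last, h1]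

lemma countA_add_countB (n : ℕ) (v : Fin n → Bool) :
    countA n v n + countB n v n = n := by
  unfold countA countB
  have e1 : Finset.univ.filter (fun i : Fin n => i.val < n ∧ v i = true)
      = Finset.univ.filter (fun i : Fin n => v i = true) := by
    ext i; simp [i.isLt]
  have e2 : Finset.univ.filter (fun i : Fin n => i.val < n ∧ v i = false)
      = Finset.univ.filter (fun i : Fin n => ¬ (v i = true)) := by
    ext i; simp [i.isLt]
  rw [e1, e2, Finset.card_filter_add_card_filter_not]
  simp

lemma countA_le (n : ℕ) (v : Fin n → Bool) (r : ℕ) : countA n v r ≤ n := by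
  unfold countA
  exact le_trans (Finset.card_filter_le _ _) (by simp)

def sat (μ n : ℕ) (v : Fin n → Bool) : Prop :=
  ∀ r, 1 ≤ r → r ≤ n → μ * countB n v r ≤ countA n v r

open Classical in
noncomputable def good (μ n a : ℕ) : Finset (Fin n → Bool) :=
  Finset.univ.filter (fun v => countA n v n = a ∧ sat μ n v)

open Classical in
lemma mem_good {μ n a : ℕ} {v : Fin n → Bool} :
    v ∈ good μ n a ↔ countA n v n = a ∧ sat μ n v := by
  simp [good]

lemma good_empty_of_lt {μ n a : ℕ} (h : n < a) : good μ n a = ∅ := by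
  ext v
  simp only [mem_good, Finset.notMem_empty, iff_false, not_and]
  intro hv
  exact absurd hv (by have := countA_le n v n; omega)

lemma good_empty_of_cond {μ n a : ℕ} (h : a < μ * (n - a)) : good μ n a = ∅ := by
  ext v
  simp only [mem_good, Finset.notMem_empty, iff_false, not_and]
  intro hv hs
  have hle : a ≤ n := by have := countA_le n v n; omega
  have hn : 1 ≤ n := by
    by_contra hn
    have hn0 : n = 0 := by omega
    subst hn0
    have ha0 : a = 0 := by omega
    subst ha0
    simp at h
  have hB : countB n v n = n - a := by have := countA_add_countB n v; omega
  have := hs n hn le_rfl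
  rw [hv, hB] at this
  omega

lemma snoc_mem_good {μ m a : ℕ} {u : Fin m → Bool} {x : Bool} :
    Fin.snoc u x ∈ good μ (m+1) a ↔
      (countA m u m + (if x = true then 1 else 0) = a) ∧ sat μ m u ∧ μ * (m + 1 - a) ≤ a := by
  rw [mem_good]
  constructor
  · rintro ⟨hc, hs⟩
    rw [countA_snoc_total] at hc
    refine ⟨hc, ?_, ?_⟩
    · intro r hr1 hr2
      have := hs r hr1 (by omega)
      rwa [countA_snoc m u x hr2, countB_snoc m u x hr2] at this
    · have hB : countB (m+1) (Fin.snoc u x) (m+1) = m + 1 - a := by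
        have h1 := countA_add_countB (m+1) (Fin.snoc u x)
        rw [countA_snoc_total] at h1
        omega
      have := hs (m+1) (by omega) le_rfl
      rw [hB] at this
      rw [countA_snoc_total] at this
      omega
  · rintro ⟨hc, hs, hcond⟩
    have hcA : countA (m+1) (Fin.snoc u x) (m+1) = a := by
      rw [countA_snoc_total]; exact hc
    refine ⟨hcA, ?_⟩
    intro r hr1 hr2
    rcases Nat.lt_or_ge r (m+1) with hlt | hge
    · have hrm : r ≤ m := by omega
      rw [countA_snoc m u x hrm, countB_snoc m u x hrm]
      exact hs r hr1 hrm
    · have hr : r = m + 1 := by omega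
      subst hr
      have hB : countB (m+1) (Fin.snoc u x) (m+1) = m + 1 - a := by
        have h1 := countA_add_countB (m+1) (Fin.snoc u x)
        omega
      rw [hB, hcA]
      exact hcond

lemma good_succ_card (μ m a : ℕ) (h : μ * (m - a) ≤ a + 1) :
    (good μ (m+1) (a+1)).card = (good μ m (a+1)).card + (good μ m a).card := by
  have hset : good μ (m+1) (a+1) =
      (good μ m (a+1)).image (fun u => Fin.snoc u false) ∪
      (good μ m a).image (fun u => Fin.snoc u true) := by
    ext v
    constructor
    · intro hv
      have hrep : v = Fin.snoc (Fin.init v) (v (Fin.last m)) := (Fin.snoc_init_self v).symm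
      rw [hrep] at hv ⊢
      rw [snoc_mem_good] at hv
      obtain ⟨hc, hs, hcond⟩ := hv
      cases hx : v (Fin.last m)
      · rw [hx] at hc
        simp at hc
        apply Finset.mem_union_left
        exact Finset.mem_image_of_mem _ (mem_good.mpr ⟨by omega, hs⟩)
      · rw [hx] at hc
        simp at hc
        apply Finset.mem_union_right
        exact Finset.mem_image_of_mem _ (mem_good.mpr ⟨by omega, hs⟩)
    · intro hv
      have hcond : μ * (m + 1 - (a + 1)) ≤ a + 1 := by
        rw [Nat.add_sub_add_right]; exact h
      rcases Finset.mem_union.mp hv with hv | hv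
      · obtain ⟨u, hu, rfl⟩ := Finset.mem_image.mp hv
        rw [mem_good] at hu
        rw [snoc_mem_good]
        exact ⟨by simp [hu.1], hu.2, hcond⟩
      · obtain ⟨u, hu, rfl⟩ := Finset.mem_image.mp hv
        rw [mem_good] at hu
        rw [snoc_mem_good]
        exact ⟨by simp [hu.1], hu.2, hcond⟩
  have hinj : ∀ x : Bool, Function.Injective (fun u : Fin m → Bool => (Fin.snoc u x : Fin (m+1) → Bool)) := by
    intro x u1 u2 he
    funext i
    have h2 := congrFun he i.castSucc
    simpa using h2
  have hdisj : Disjoint ((good μ m (a+1)).image (fun u => (Fin.snoc u false : Fin (m+1) → Bool)))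
      ((good μ m a).image (fun u => (Fin.snoc u true : Fin (m+1) → Bool))) := by
    rw [Finset.disjoint_left]
    rintro v hv1 hv2
    obtain ⟨u1, _, rfl⟩ := Finset.mem_image.mp hv1
    obtain ⟨u2, _, he⟩ := Finset.mem_image.mp hv2
    have h1 := congrFun he (Fin.last m)
    simp at h1
  rw [hset, Finset.card_union_of_disjoint hdisj,
    Finset.card_image_of_injective _ (hinj false), Finset.card_image_of_injective _ (hinj true)]

lemma good_zero (μ a : ℕ) : (good μ 0 a).card = if a = 0 then 1 else 0 := by
  rcases Nat.eq_zero_or_pos a with rfl | ha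
  · simp only [if_pos rfl]
    have : good μ 0 0 = Finset.univ := by
      ext v
      simp only [mem_good, Finset.mem_univ, iff_true]
      constructor
      · simp [countA]
      · intro r hr1 hr2; omega
    rw [this]
    simp [Finset.card_univ]
  · rw [good_empty_of_lt (by omega), if_neg (by omega)]
    simp

lemma good_count_main (μ : ℕ) (hμ : 0 < μ) :
    ∀ m a b : ℕ, m = a + b → μ * b ≤ a →
      ((good μ m a).card : ℤ) * (a+1) + μ * b * (a+b).choose b = (a+1) * (a+b).choose b := by
  intro m
  induction m with
  | zero =>
    intro a b hm hab
    have ha : a = 0 := by omega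
    have hb : b = 0 := by omega
    subst ha; subst hb
    rw [good_zero]
    simp
  | succ m ih =>
    intro a b hm hab
    rcases b with _ | b'
    · -- b = 0, a = m + 1
      have ha : a = m + 1 := by omega
      subst ha
      have h0 : μ * (m - m) = 0 := by simp
      have hrec := good_succ_card μ m m (by omega)
      have hlt : (good μ m (m+1)).card = 0 := by rw [good_empty_of_lt (by omega)]; simp
      have ihm := ih m 0 (by omega) (by simp)
      simp only [Nat.add_zero, Nat.choose_zero_right] at ihm ⊢
      have hN : ((good μ m m).card : ℤ) = 1 := by
        have hpos : ((m : ℤ) + 1) ≠ 0 := by positivity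
        have : ((good μ m m).card : ℤ) * (m + 1) = 1 * (m + 1) := by push_cast at ihm ⊢; linarith
        exact mul_right_cancel₀ hpos this
      rw [hrec]
      push_cast
      rw [hlt]
      push_cast at hN
      push_cast
      nlinarith [hN]
    · -- b = b' + 1
      have hapos : 0 < a := by
        have := Nat.mul_pos hμ (show 0 < b' + 1 by omega)
        omega
      obtain ⟨a', rfl⟩ : ∃ a', a = a' + 1 := ⟨a - 1, by omega⟩
      have hm' : m = a' + 1 + b' := by omega
      have hsub : m - a' = b' + 1 := by omega
      have hrec := good_succ_card μ m a' (by rw [hsub]; omega)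
      have hab' : μ * b' ≤ a' + 1 := by
        have : μ * b' ≤ μ * (b' + 1) := Nat.mul_le_mul_left μ (by omega)
        omega
      have ih1 := ih (a' + 1) b' (by omega) hab'
      -- constants
      set c0 : ℤ := ((a' + 1 + b').choose b' : ℤ) with hc0
      have hcsum : ((a' + 1 + (b' + 1)).choose (b' + 1) : ℤ)
          = c0 + ((a' + 1 + b').choose (b' + 1) : ℤ) := by
        have h1 : a' + 1 + (b' + 1) = (a' + 1 + b') + 1 := by omega
        rw [h1, Nat.choose_succ_succ']
        push_cast
        ring
      set c1 : ℤ := ((a' + 1 + b').choose (b' + 1) : ℤ) with hc1def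
      have e3 : ((b' : ℤ) + 1) * c1 = ((a' : ℤ) + 1) * c0 := by
        have h := Nat.choose_succ_right_eq (a' + 1 + b') b'
        have h2 : a' + 1 + b' - b' = a' + 1 := by omega
        rw [h2] at h
        have := congrArg (fun x : ℕ => (x : ℤ)) h
        push_cast at this
        rw [hc0, hc1def]
        linarith
      have e1 : ((good μ m (a' + 1)).card : ℤ) * ((a' : ℤ) + 2) + (μ : ℤ) * b' * c0
          = ((a' : ℤ) + 2) * c0 := by
        rw [hm'] at ih1 ⊢
        push_cast at ih1 ⊢
        linarith
      rcases le_or_gt (μ * (b' + 1)) a' with hle | hgt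
      · -- both IHs apply
        have ih2 := ih a' (b' + 1) (by omega) hle
        have e2 : ((good μ m a').card : ℤ) * ((a' : ℤ) + 1) + (μ : ℤ) * ((b' : ℤ) + 1) * c1
            = ((a' : ℤ) + 1) * c1 := by
          have hx : a' + (b' + 1) = a' + 1 + b' := by omega
          rw [hx] at ih2
          rw [hm'] at ih2 ⊢
          push_cast at ih2 ⊢
          linarith
        have hN2 : ((good μ m a').card : ℤ) = c1 - (μ : ℤ) * c0 := by
          have hz : ((a' : ℤ) + 1) * (((good μ m a').card : ℤ) - c1 + (μ : ℤ) * c0) = 0 := by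
            linear_combination e2 - (μ : ℤ) * e3
          have hne : ((a' : ℤ) + 1) ≠ 0 := by positivity
          have := mul_eq_zero.mp hz
          rcases this with h | h
          · exact absurd h hne
          · linarith
        rw [hrec, hcsum]
        push_cast
        linear_combination e1 + ((a' : ℤ) + 2) * hN2 + (μ : ℤ) * e3
      · -- μ * (b'+1) = a' + 1, good μ m a' empty
        have hμa : μ * (b' + 1) = a' + 1 := by omega
        have hN2 : (good μ m a').card = 0 := by
          rw [good_empty_of_cond (by rw [hsub]; omega)]; simp
        have hμaZ : (μ : ℤ) * ((b' : ℤ) + 1) = (a' : ℤ) + 1 := by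
          have hz2 := congrArg (fun x : ℕ => (x : ℤ)) hμa
          push_cast at hz2
          linarith
        have hc1 : c1 = (μ : ℤ) * c0 := by
          have hz : ((b' : ℤ) + 1) * (c1 - (μ : ℤ) * c0) = 0 := by
            linear_combination e3 - c0 * hμaZ
          have hne : ((b' : ℤ) + 1) ≠ 0 := by positivity
          rcases mul_eq_zero.mp hz with h | h
          · exact absurd h hne
          · linarith
        rw [hrec, hcsum]
        push_cast
        rw [hN2]
        push_cast
        linear_combination e1 + c1 * hμaZ - hc1

open Classical in
lemma card_countA_filter (n a : ℕ) :
    (Finset.univ.filter (fun v : Fin n → Bool => countA n v n = a)).card = n.choose a := by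
  classical
  have key : ∀ v : Fin n → Bool, countA n v n = (Finset.univ.filter (fun i => v i = true)).card := by
    intro v
    unfold countA
    congr 1
    ext i
    simp [i.isLt]
  rw [show n.choose a = ((Finset.univ : Finset (Fin n)).powersetCard a).card by
    rw [Finset.card_powersetCard]; simp]
  apply Finset.card_bij' (fun v _ => Finset.univ.filter (fun i => v i = true))
    (fun s _ => fun i => decide (i ∈ s))
  · intro v hv
    funext i
    simp
  · intro s hs
    ext i
    simp
  · intro v hv
    simp only [Finset.mem_filter, Finset.mem_univ, true_and] at hv
    rw [Finset.mem_powersetCard_univ, ← key, hv]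
  · intro s hs
    simp only [Finset.mem_filter, Finset.mem_univ, true_and]
    rw [key]
    rw [Finset.mem_powersetCard_univ] at hs
    rw [← hs]
    congr 1
    ext i
    simp

open Classical in
theorem ballot_weak_integer_slope (μ a b : ℕ) (hμ : 0 < μ) (hab : μ * b ≤ a) :
    (((Finset.univ.filter (fun v : Fin (a + b) → Bool =>
        countA (a + b) v (a + b) = a ∧
        ∀ r, 1 ≤ r → r ≤ a + b → μ * countB (a + b) v r ≤ countA (a + b) v r)).card : ℝ) /
      ((Finset.univ.filter (fun v : Fin (a + b) → Bool =>
        countA (a + b) v (a + b) = a)).card : ℝ))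
      = ((a : ℝ) - (μ : ℝ) * b + 1) / ((a : ℝ) + 1) := by
  classical
  have hnum : (Finset.univ.filter (fun v : Fin (a + b) → Bool =>
        countA (a + b) v (a + b) = a ∧
        ∀ r, 1 ≤ r → r ≤ a + b → μ * countB (a + b) v r ≤ countA (a + b) v r)).card
      = (good μ (a + b) a).card := by
    congr 1
  have hden := card_countA_filter (a + b) a
  have hsymm : (a + b).choose a = (a + b).choose b := by
    rw [← Nat.choose_symm (Nat.le_add_right a b)]
    congr 1
    omega
  have key := good_count_main μ hμ (a + b) a b rfl hab
  rw [hnum, hden, hsymm]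
  have hC : 0 < (a + b).choose b := Nat.choose_pos (by omega)
  have hCne : (((a + b).choose b : ℝ)) ≠ 0 := by positivity
  have hAne : ((a : ℝ) + 1) ≠ 0 := by positivity
  have keyR : ((good μ (a + b) a).card : ℝ) * ((a : ℝ) + 1)
      + (μ : ℝ) * (b : ℝ) * ((a + b).choose b : ℝ)
      = ((a : ℝ) + 1) * ((a + b).choose b : ℝ) := by
    exact_mod_cast key
  field_simp
  linear_combination keyR
end

section
/- Let μ be a positive real number and a, b positive integers with a ≥ μb. The probability P* that a random ordering of a votes for A and b votes for B satisfies a_r ≥ μ·b_r for all r is at most (a + 1 - μb)/(a + 1). -/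
namespace BallotAux

open Finset
open Fin.NatCast

/-- Partial sum of weights: +1 for true, -μ for false, reading positions cyclically. -/
noncomputable def pS (μ : ℝ) {n : ℕ} [NeZero n] (w : Fin n → Bool) (m : ℕ) : ℝ :=
  ∑ i ∈ Finset.range m, (if w ((i : ℕ) : Fin n) = true then (1:ℝ) else -μ)

/-- Cyclic shift by k. -/
def shift {n : ℕ} [NeZero n] (k : ℕ) (w : Fin n → Bool) : Fin n → Bool :=
  fun i => w (i + (k : Fin n))

/-- All partial sums at least 1. -/
def GoodS (μ : ℝ) {n : ℕ} [NeZero n] (w : Fin n → Bool) : Prop :=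
  ∀ m, 1 ≤ m → m ≤ n → 1 ≤ pS μ w m

lemma countA_eq_range (n : ℕ) [NeZero n] (w : Fin n → Bool) (m : ℕ) (hm : m ≤ n) :
    countA n w m = ((Finset.range m).filter (fun j => w ((j : ℕ) : Fin n) = true)).card := by
  unfold countA
  apply Finset.card_bij (fun i _ => (i : Fin n).val)
  · intro i hi
    simp only [mem_filter, mem_univ, true_and] at hi ⊢
    refine ⟨mem_range.mpr hi.1, ?_⟩
    rw [Fin.cast_val_eq_self]
    exact hi.2
  · intro i hi j hj h
    exact Fin.val_injective h
  · intro j hj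
    simp only [mem_filter, mem_range] at hj
    refine ⟨(j : Fin n), ?_, ?_⟩
    · simp only [mem_filter, mem_univ, true_and]
      rw [Fin.val_cast_of_lt (lt_of_lt_of_le hj.1 hm)]
      exact ⟨hj.1, hj.2⟩
    · exact Fin.val_cast_of_lt (lt_of_lt_of_le hj.1 hm)

lemma countB_eq_range (n : ℕ) [NeZero n] (w : Fin n → Bool) (m : ℕ) (hm : m ≤ n) :
    countB n w m = ((Finset.range m).filter (fun j => ¬ (w ((j : ℕ) : Fin n) = true))).card := by
  unfold countB
  apply Finset.card_bij (fun i _ => (i : Fin n).val)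
  · intro i hi
    simp only [mem_filter, mem_univ, true_and, Bool.not_eq_true] at hi ⊢
    refine ⟨mem_range.mpr hi.1, ?_⟩
    rw [Fin.cast_val_eq_self]
    exact hi.2
  · intro i hi j hj h
    exact Fin.val_injective h
  · intro j hj
    simp only [mem_filter, mem_range, Bool.not_eq_true] at hj
    refine ⟨(j : Fin n), ?_, ?_⟩
    · simp only [mem_filter, mem_univ, true_and]
      rw [Fin.val_cast_of_lt (lt_of_lt_of_le hj.1 hm)]
      exact ⟨hj.1, hj.2⟩
    · exact Fin.val_cast_of_lt (lt_of_lt_of_le hj.1 hm)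

lemma pS_eq_counts (μ : ℝ) (n : ℕ) [NeZero n] (w : Fin n → Bool) (m : ℕ) (hm : m ≤ n) :
    pS μ w m = (countA n w m : ℝ) - μ * (countB n w m : ℝ) := by
  rw [countA_eq_range n w m hm, countB_eq_range n w m hm]
  unfold pS
  rw [← Finset.sum_filter_add_sum_filter_not (Finset.range m)
    (fun j => w ((j : ℕ) : Fin n) = true)]
  rw [Finset.sum_congr rfl (fun x hx => if_pos (mem_filter.mp hx).2),
      Finset.sum_congr rfl (fun x hx => if_neg (mem_filter.mp hx).2)]
  simp [mul_comm]
  ring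

lemma pS_add_period (μ : ℝ) (n : ℕ) [NeZero n] (w : Fin n → Bool) (m : ℕ) :
    pS μ w (m + n) = pS μ w m + pS μ w n := by
  unfold pS
  rw [Finset.sum_range_add]
  congr 1
  have h1 : ∀ i : ℕ, ((m + i : ℕ) : Fin n) = ((m : ℕ) : Fin n) + ((i : ℕ) : Fin n) := by
    intro i; push_cast; ring
  calc ∑ i ∈ Finset.range n, (if w ((m + i : ℕ) : Fin n) = true then (1:ℝ) else -μ)
      = ∑ j : Fin n, (if w (((m : ℕ) : Fin n) + ((j : ℕ) : Fin n)) = true then (1:ℝ) else -μ) := by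
        rw [← Fin.sum_univ_eq_sum_range
          (fun i => if w ((m + i : ℕ) : Fin n) = true then (1:ℝ) else -μ) n]
        exact Finset.sum_congr rfl (fun j _ => by rw [h1 j.val])
    _ = ∑ j : Fin n, (if w (((m : ℕ) : Fin n) + j) = true then (1:ℝ) else -μ) :=
        Finset.sum_congr rfl (fun j _ => by rw [Fin.cast_val_eq_self])
    _ = ∑ j : Fin n, (if w j = true then (1:ℝ) else -μ) :=
        Fintype.sum_equiv (Equiv.addLeft ((m : ℕ) : Fin n)) _ _ (fun j => rfl)
    _ = ∑ i ∈ Finset.range n, (if w ((i : ℕ) : Fin n) = true then (1:ℝ) else -μ) := by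
        rw [← Fin.sum_univ_eq_sum_range
          (fun i => if w ((i : ℕ) : Fin n) = true then (1:ℝ) else -μ) n]
        exact Finset.sum_congr rfl (fun j _ => by rw [Fin.cast_val_eq_self])

lemma pS_shift (μ : ℝ) (n : ℕ) [NeZero n] (w : Fin n → Bool) (k m : ℕ) :
    pS μ (shift k w) m = pS μ w (k + m) - pS μ w k := by
  induction m with
  | zero => simp [pS]
  | succ m ih =>
    have h : k + (m + 1) = (k + m) + 1 := by ring
    rw [h]
    unfold pS at *
    rw [Finset.sum_range_succ, Finset.sum_range_succ, ih]
    have h2 : shift k w ((m : ℕ) : Fin n) = w (((k + m : ℕ)) : Fin n) := by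
      unfold shift; congr 1; push_cast; abel
    rw [h2]; ring

lemma shift_shift {n : ℕ} [NeZero n] (j k : ℕ) (w : Fin n → Bool) :
    shift j (shift k w) = shift (j + k) w := by
  funext i; unfold shift; congr 1; push_cast; abel

lemma shift_n {n : ℕ} [NeZero n] (w : Fin n → Bool) : shift n w = w := by
  funext i; unfold shift; rw [Fin.natCast_self, add_zero]

lemma countA_n (n : ℕ) (w : Fin n → Bool) :
    countA n w n = (Finset.univ.filter (fun i : Fin n => w i = true)).card := by
  unfold countA
  congr 1
  exact Finset.filter_congr (fun i _ => by simp [i.isLt])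

lemma countA_shift (n : ℕ) [NeZero n] (k : ℕ) (w : Fin n → Bool) :
    countA n (shift k w) n = countA n w n := by
  rw [countA_n, countA_n]
  apply Finset.card_bij (fun i _ => i + (k : Fin n))
  · intro i hi
    simp only [mem_filter, mem_univ, true_and] at hi ⊢
    exact hi
  · intro i _ j _ h
    exact add_right_cancel h
  · intro j hj
    simp only [mem_filter, mem_univ, true_and] at hj ⊢
    exact ⟨j - (k : Fin n), by simpa [shift] using hj, by abel⟩

lemma countAB_total (n : ℕ) (w : Fin n → Bool) :
    countA n w n + countB n w n = n := by
  unfold countA countB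
  have h1 : (Finset.univ.filter (fun i : Fin n => i.val < n ∧ w i = false))
      = Finset.univ.filter (fun i : Fin n => ¬ (i.val < n ∧ w i = true)) := by
    apply Finset.filter_congr
    intro i _
    simp [i.isLt]
  rw [h1, Finset.card_filter_add_card_filter_not]
  simp

open Classical in
/-- Key cycle lemma: the number of good cyclic shifts is at most ⌊s-1⌋+1 where s = pS μ w n. -/
lemma card_good_shifts_le (μ : ℝ) (n : ℕ) [NeZero n] (w : Fin n → Bool) :
    ((Finset.range n).filter (fun k => GoodS μ (shift k w))).card ≤ ⌊pS μ w n - 1⌋₊ + 1 := by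
  set s := pS μ w n with hsdef
  set K := (Finset.range n).filter (fun k => GoodS μ (shift k w)) with hKdef
  rcases K.eq_empty_or_nonempty with hK | hK
  · simp [hK]
  have hstep : ∀ k ∈ K, ∀ k', k < k' → k' ≤ k + n → pS μ w k + 1 ≤ pS μ w k' := by
    intro k hk k' h1 h2
    rw [hKdef, mem_filter] at hk
    have hg := hk.2 (k' - k) (by omega) (by omega)
    rw [pS_shift] at hg
    have h3 : k + (k' - k) = k' := by omega
    rw [h3] at hg
    linarith
  set k₀ := K.min' hK with hk₀def
  have hk₀K : k₀ ∈ K := K.min'_mem hK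
  have hmemn : ∀ k ∈ K, k < n := by
    intro k hk; rw [hKdef, mem_filter, mem_range] at hk; exact hk.1
  have hx0 : ∀ k ∈ K, pS μ w k₀ ≤ pS μ w k := by
    intro k hk
    rcases eq_or_lt_of_le (K.min'_le k hk) with h | h
    · exact le_of_eq (by rw [hk₀def, h])
    · have := hstep k₀ hk₀K k h (by have := hmemn k hk; omega)
      linarith
  have hx1 : ∀ k ∈ K, pS μ w k ≤ pS μ w k₀ + (s - 1) := by
    intro k hk
    have h1 := hstep k hk (k₀ + n) (by have := hmemn k hk; omega)
      (by have : k₀ ≤ k := K.min'_le k hk; omega)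
    rw [pS_add_period] at h1
    linarith
  have key : ∀ k ∈ K, ∀ k' ∈ K, k < k' →
      ⌊pS μ w k - pS μ w k₀⌋₊ < ⌊pS μ w k' - pS μ w k₀⌋₊ := by
    intro k hk k' hk' hlt
    have h1 := hstep k hk k' hlt (by have := hmemn k' hk'; omega)
    have h0 : (0:ℝ) ≤ pS μ w k - pS μ w k₀ := by linarith [hx0 k hk]
    have h2 : (pS μ w k - pS μ w k₀) + 1 ≤ pS μ w k' - pS μ w k₀ := by linarith
    calc ⌊pS μ w k - pS μ w k₀⌋₊ < ⌊pS μ w k - pS μ w k₀⌋₊ + 1 := Nat.lt_succ_self _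
      _ = ⌊(pS μ w k - pS μ w k₀) + 1⌋₊ := (Nat.floor_add_one h0).symm
      _ ≤ ⌊pS μ w k' - pS μ w k₀⌋₊ := Nat.floor_le_floor h2
  calc K.card ≤ (Finset.range (⌊s - 1⌋₊ + 1)).card := by
        apply Finset.card_le_card_of_injOn (fun k => ⌊pS μ w k - pS μ w k₀⌋₊)
        · intro k hk
          rw [mem_coe, mem_range, Nat.lt_succ_iff]
          exact Nat.floor_le_floor (by linarith [hx1 k hk, hx0 k hk])
        · intro k hk k' hk' heq
          by_contra hne
          rcases lt_or_gt_of_ne hne with h | h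
          · exact absurd heq (Nat.ne_of_lt (key k hk k' hk' h))
          · exact absurd heq.symm (Nat.ne_of_lt (key k' hk' k hk h))
    _ = ⌊s - 1⌋₊ + 1 := Finset.card_range _

open Classical in
lemma card_filter_shift (μ : ℝ) (n t : ℕ) [NeZero n] (k : ℕ) (hk : k ≤ n) :
    ((Finset.univ.filter (fun w : Fin n → Bool =>
        countA n w n = t ∧ GoodS μ (shift k w))).card)
      = (Finset.univ.filter (fun w : Fin n → Bool =>
        countA n w n = t ∧ GoodS μ w)).card := by
  apply Finset.card_bij (fun w _ => shift k w)
  · intro w hw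
    simp only [mem_filter, mem_univ, true_and] at hw ⊢
    exact ⟨by rw [countA_shift]; exact hw.1, hw.2⟩
  · intro w _ w' _ h
    have h2 := congrArg (shift (n - k)) h
    rwa [shift_shift, shift_shift, Nat.sub_add_cancel hk, shift_n, shift_n] at h2
  · intro u hu
    simp only [mem_filter, mem_univ, true_and] at hu
    refine ⟨shift (n - k) u, ?_, ?_⟩
    · simp only [mem_filter, mem_univ, true_and]
      constructor
      · rw [countA_shift]; exact hu.1
      · rw [shift_shift, Nat.add_sub_cancel' hk, shift_n]; exact hu.2
    · rw [shift_shift, Nat.add_sub_cancel' hk, shift_n]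

open Classical in
lemma double_count (μ : ℝ) (n t M : ℕ) [NeZero n]
    (hM : ∀ w : Fin n → Bool, countA n w n = t →
      ((Finset.range n).filter (fun k => GoodS μ (shift k w))).card ≤ M) :
    n * (Finset.univ.filter (fun w : Fin n → Bool =>
          countA n w n = t ∧ GoodS μ w)).card
      ≤ M * (Finset.univ.filter (fun w : Fin n → Bool => countA n w n = t)).card := by
  have h1 : n * (Finset.univ.filter (fun w : Fin n → Bool =>
      countA n w n = t ∧ GoodS μ w)).card
      = ∑ k ∈ Finset.range n, ((Finset.univ.filter (fun w : Fin n → Bool =>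
          countA n w n = t ∧ GoodS μ (shift k w))).card) := by
    rw [Finset.sum_congr rfl (fun k hk => card_filter_shift μ n t k
      (le_of_lt (mem_range.mp hk)))]
    rw [Finset.sum_const, Finset.card_range, smul_eq_mul]
  rw [h1]
  have h2 : ∀ k : ℕ, (Finset.univ.filter (fun w : Fin n → Bool =>
      countA n w n = t ∧ GoodS μ (shift k w))).card
      = ∑ w ∈ Finset.univ.filter (fun w : Fin n → Bool => countA n w n = t),
          (if GoodS μ (shift k w) then 1 else 0) := by
    intro k
    rw [← Finset.filter_filter, Finset.card_filter]
  calc ∑ k ∈ Finset.range n, ((Finset.univ.filter (fun w : Fin n → Bool =>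
          countA n w n = t ∧ GoodS μ (shift k w))).card)
      = ∑ k ∈ Finset.range n, ∑ w ∈ Finset.univ.filter
          (fun w : Fin n → Bool => countA n w n = t),
          (if GoodS μ (shift k w) then 1 else 0) := Finset.sum_congr rfl (fun k _ => h2 k)
    _ = ∑ w ∈ Finset.univ.filter (fun w : Fin n → Bool => countA n w n = t),
          ∑ k ∈ Finset.range n, (if GoodS μ (shift k w) then 1 else 0) := Finset.sum_comm
    _ = ∑ w ∈ Finset.univ.filter (fun w : Fin n → Bool => countA n w n = t),
          ((Finset.range n).filter (fun k => GoodS μ (shift k w))).card := by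
        exact Finset.sum_congr rfl (fun w _ => (Finset.card_filter _ _).symm)
    _ ≤ ∑ w ∈ Finset.univ.filter (fun w : Fin n → Bool => countA n w n = t), M := by
        apply Finset.sum_le_sum
        intro w hw
        exact hM w (by simpa using (mem_filter.mp hw).2)
    _ = M * (Finset.univ.filter (fun w : Fin n → Bool => countA n w n = t)).card := by
        rw [Finset.sum_const, smul_eq_mul, mul_comm]

lemma countA_cons_true (N : ℕ) (v : Fin N → Bool) (r : ℕ) :
    countA (N+1) (Fin.cons true v) (r+1) = 1 + countA N v r := by
  unfold countA
  rw [Finset.card_filter, Finset.card_filter, Fin.sum_univ_succ]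
  simp [Fin.cons_succ, Fin.val_succ, Nat.succ_lt_succ_iff]

lemma countB_cons_true (N : ℕ) (v : Fin N → Bool) (r : ℕ) :
    countB (N+1) (Fin.cons true v) (r+1) = countB N v r := by
  unfold countB
  rw [Finset.card_filter, Finset.card_filter, Fin.sum_univ_succ]
  simp [Fin.cons_succ, Fin.val_succ, Nat.succ_lt_succ_iff]

lemma countA_zero (N : ℕ) (v : Fin N → Bool) : countA N v 0 = 0 := by
  simp [countA]

lemma countB_zero (N : ℕ) (v : Fin N → Bool) : countB N v 0 = 0 := by
  simp [countB]

open Classical in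
lemma card_count_eq (N t : ℕ) :
    ((Finset.univ.filter (fun v : Fin N → Bool => countA N v N = t)).card) = N.choose t := by
  have h := Finset.card_powersetCard t (Finset.univ : Finset (Fin N))
  rw [Finset.card_univ, Fintype.card_fin] at h
  rw [← h]
  apply Finset.card_bij (fun v _ => Finset.univ.filter (fun i => v i = true))
  · intro v hv
    simp only [mem_filter, mem_univ, true_and] at hv
    rw [Finset.mem_powersetCard]
    exact ⟨Finset.subset_univ _, by rw [← countA_n]; exact hv⟩
  · intro v hv v' hv' h
    funext i
    have := Finset.ext_iff.mp h i
    simp only [mem_filter, mem_univ, true_and] at this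
    cases hvi : v i <;> cases hvi' : v' i <;> simp [hvi, hvi'] at this ⊢
  · intro s hs
    rw [Finset.mem_powersetCard] at hs
    refine ⟨fun i => decide (i ∈ s), ?_, ?_⟩
    · simp only [mem_filter, mem_univ, true_and]
      rw [countA_n]
      have h2 : Finset.univ.filter (fun i => decide (i ∈ s) = true) = s := by
        ext i; simp
      rw [h2]; exact hs.2
    · ext i; simp

end BallotAux

open Classical in
theorem ballot_weak_upper_bound (μ : ℝ) (a b : ℕ) (hμ : 0 < μ) (ha : 0 < a) (hb : 0 < b)
    (hab : μ * b ≤ a) :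
    (((Finset.univ.filter (fun v : Fin (a + b) → Bool =>
        countA (a + b) v (a + b) = a ∧
        ∀ r, 1 ≤ r → r ≤ a + b →
          μ * (countB (a + b) v r : ℝ) ≤ (countA (a + b) v r : ℝ))).card : ℝ) /
      ((Finset.univ.filter (fun v : Fin (a + b) → Bool =>
        countA (a + b) v (a + b) = a)).card : ℝ))
      ≤ ((a : ℝ) + 1 - μ * b) / ((a : ℝ) + 1) := by
  classical
  open BallotAux in
  set s : ℝ := (a:ℝ) + 1 - μ * b with hsdef
  have hs1 : 1 ≤ s := by
    have : (1:ℝ) ≤ (a:ℝ) + 1 - μ * b := by push_cast; linarith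
    simpa [hsdef] using this
  set M : ℕ := ⌊s - 1⌋₊ + 1 with hMdef
  have hMle : (M:ℝ) ≤ s := by
    have h1 : (⌊s - 1⌋₊ : ℝ) ≤ s - 1 := Nat.floor_le (by linarith)
    rw [hMdef]; push_cast; linarith
  -- every word of length a+b+1 with a+1 trues has total partial sum s
  have hpSn : ∀ w : Fin (a+b+1) → Bool, countA (a+b+1) w (a+b+1) = a+1 →
      pS μ w (a+b+1) = s := by
    intro w hw
    have htot := countAB_total (a+b+1) w
    have hb' : countB (a+b+1) w (a+b+1) = b := by omega
    rw [pS_eq_counts μ (a+b+1) w (a+b+1) le_rfl, hw, hb']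
    push_cast [hsdef]; ring
  have hMbound : ∀ w : Fin (a+b+1) → Bool, countA (a+b+1) w (a+b+1) = a+1 →
      ((Finset.range (a+b+1)).filter (fun k => GoodS μ (shift k w))).card ≤ M := by
    intro w hw
    have h := card_good_shifts_le μ (a+b+1) w
    rw [hpSn w hw] at h
    exact h
  have hdc := double_count μ (a+b+1) (a+1) M hMbound
  -- injection of favorable words into good words of length a+b+1
  have hinj : (Finset.univ.filter (fun v : Fin (a + b) → Bool =>
        countA (a + b) v (a + b) = a ∧
        ∀ r, 1 ≤ r → r ≤ a + b →
          μ * (countB (a + b) v r : ℝ) ≤ (countA (a + b) v r : ℝ))).card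
      ≤ (Finset.univ.filter (fun w : Fin (a+b+1) → Bool =>
          countA (a+b+1) w (a+b+1) = a+1 ∧ GoodS μ w)).card := by
    apply Finset.card_le_card_of_injOn (fun v : Fin (a+b) → Bool => (Fin.cons true v : Fin (a+b+1) → Bool))
    · intro v hv
      simp only [Finset.mem_coe, Finset.mem_filter, Finset.mem_univ, true_and] at hv ⊢
      obtain ⟨hA, hfav⟩ := hv
      constructor
      · rw [countA_cons_true, hA]; omega
      · intro m h1 hm
        obtain ⟨r, rfl⟩ : ∃ r, m = r + 1 := ⟨m - 1, by omega⟩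
        rw [pS_eq_counts μ (a+b+1) _ _ hm, countA_cons_true, countB_cons_true]
        rcases Nat.eq_zero_or_pos r with rfl | hr
        · rw [countA_zero, countB_zero]
          push_cast; linarith
        · have := hfav r hr (by omega)
          push_cast
          linarith
    · intro v _ v' _ h
      have := congrArg Fin.tail h
      rwa [Fin.tail_cons, Fin.tail_cons] at this
  -- cardinalities
  have hD : (Finset.univ.filter (fun v : Fin (a + b) → Bool =>
      countA (a + b) v (a + b) = a)).card = (a+b).choose a := card_count_eq (a+b) a
  have hΩ : (Finset.univ.filter (fun w : Fin (a+b+1) → Bool =>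
      countA (a+b+1) w (a+b+1) = a+1)).card = (a+b+1).choose (a+1) :=
    card_count_eq (a+b+1) (a+1)
  rw [hΩ] at hdc
  have hDpos : 0 < (a+b).choose a := Nat.choose_pos (Nat.le_add_right a b)
  -- binomial identity
  have hid : (a+1) * (a+b+1).choose (a+1) = (a+b+1) * ((a+b).choose a) := by
    have h := Nat.add_one_mul_choose_eq (a+b) a
    simpa [Nat.succ_eq_add_one, mul_comm] using h.symm
  set G := (Finset.univ.filter (fun w : Fin (a+b+1) → Bool =>
      countA (a+b+1) w (a+b+1) = a+1 ∧ GoodS μ w)).card with hGdef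
  have key : (a+1) * G ≤ M * ((a+b).choose a) := by
    have h3 : (a+b+1) * ((a+1) * G) ≤ (a+b+1) * (M * ((a+b).choose a)) := by
      calc (a+b+1) * ((a+1) * G) = (a+1) * ((a+b+1) * G) := by ring
        _ ≤ (a+1) * (M * ((a+b+1).choose (a+1))) := Nat.mul_le_mul_left _ hdc
        _ = M * ((a+1) * (a+b+1).choose (a+1)) := by ring
        _ = M * ((a+b+1) * ((a+b).choose a)) := by rw [hid]
        _ = (a+b+1) * (M * ((a+b).choose a)) := by ring
    exact Nat.le_of_mul_le_mul_left h3 (by omega)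
  -- conclude over ℝ
  rw [hD]
  have hDpos' : (0:ℝ) < ((a+b).choose a : ℝ) := by exact_mod_cast hDpos
  rw [div_le_div_iff₀ hDpos' (by positivity)]
  have c1 : ((Finset.univ.filter (fun v : Fin (a + b) → Bool =>
        countA (a + b) v (a + b) = a ∧
        ∀ r, 1 ≤ r → r ≤ a + b →
          μ * (countB (a + b) v r : ℝ) ≤ (countA (a + b) v r : ℝ))).card : ℝ) ≤ (G:ℝ) :=
    Nat.cast_le.mpr hinj
  have c2 : ((a:ℝ) + 1) * G ≤ (M:ℝ) * ((a+b).choose a) := by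
    have := key
    exact_mod_cast by push_cast; exact_mod_cast this
  have c3 : (M:ℝ) * ((a+b).choose a) ≤ s * ((a+b).choose a) :=
    mul_le_mul_of_nonneg_right hMle (le_of_lt hDpos')
  have c4 : (0:ℝ) ≤ (a:ℝ) + 1 := by positivity
  nlinarith [c1, c2, c3, c4]
end

section
/- Let μ be a positive real number and a, b positive integers with a ≥ μb. The probability P* that a random ordering of a votes for A and b votes for B satisfies a_r ≥ μ·b_r for all r is at least ⌊a - μb + 1⌋/(a + b). -/
namespace BallotAux

set_option linter.unusedSectionVars false

def S (w : ℕ → ℝ) (r : ℕ) : ℝ := ∑ i ∈ Finset.range r, w i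

lemma S_succ' (w : ℕ → ℝ) (r : ℕ) : S w (r + 1) = S w r + w r :=
  Finset.sum_range_succ _ _

lemma S_add (w : ℕ → ℝ) (k r : ℕ) :
    S w (k + r) = S w k + ∑ j ∈ Finset.range r, w (k + j) := by
  induction r with
  | zero => simp [S]
  | succ r ih =>
      rw [← Nat.add_assoc, S_succ', ih, Finset.sum_range_succ, ← add_assoc]

/-- `k` is a ladder point: the walk never goes below `S w k` after time `k`. -/
def Lad (w : ℕ → ℝ) (k : ℕ) : Prop := ∀ r, k ≤ r → S w k ≤ S w r

variable {n : ℕ} {w : ℕ → ℝ}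

lemma S_add_n (hper : ∀ r, w (r + n) = w r) (r : ℕ) :
    S w (r + n) = S w r + S w n := by
  induction r with
  | zero => simp [S]
  | succ r ih =>
      have h1 : r + 1 + n = (r + n) + 1 := by omega
      rw [h1, S_succ', ih, hper, S_succ']; ring

lemma lad_mono {k k' : ℕ} (h : Lad w k) (hkk : k ≤ k') : S w k ≤ S w k' := h k' hkk

/-- In every window of length `n` there is a ladder point whose value is at most the
value at the window start. -/
lemma exists_lad (hn : 0 < n) (hper : ∀ r, w (r + n) = w r) (hd0 : 0 ≤ S w n) (base : ℕ) :
    ∃ k, base ≤ k ∧ k < base + n ∧ Lad w k ∧ S w k ≤ S w base := by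
  obtain ⟨k, hk, hmin⟩ := Finset.exists_min_image (Finset.Ico base (base + n)) (S w)
    ⟨base, by simp [hn]⟩
  rw [Finset.mem_Ico] at hk
  refine ⟨k, hk.1, hk.2, ?_, hmin base (by simp [hn])⟩
  intro r hr
  induction r using Nat.strong_induction_on with
  | _ r ih =>
    by_cases h : r < base + n
    · exact hmin r (Finset.mem_Ico.mpr ⟨le_trans hk.1 hr, h⟩)
    · push_neg at h
      have hrn : r = (r - n) + n := by omega
      have hS := S_add_n hper (r - n)
      rw [← hrn] at hS
      rw [hS]
      have h2 : S w k ≤ S w (r - n) := by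
        by_cases h3 : k ≤ r - n
        · exact ih (r - n) (by omega) h3
        · exact hmin (r - n) (Finset.mem_Ico.mpr ⟨by omega, by omega⟩)
      linarith


/-- The least ladder point strictly after a ladder point `k`; its value is at most `S w k + 1`. -/
lemma exists_next_lad (hn : 0 < n) (hper : ∀ r, w (r + n) = w r) (hd0 : 0 ≤ S w n)
    (hw1 : ∀ r, w r ≤ 1) {k : ℕ} (hk : Lad w k) :
    ∃ k', k < k' ∧ Lad w k' ∧ S w k' ≤ S w k + 1 ∧ ∀ j, k < j → Lad w j → k' ≤ j := by
  obtain ⟨k'', h1, h2, h3, h4⟩ := exists_lad hn hper hd0 (k + 1)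
  have hex : ∃ j, k < j ∧ Lad w j := ⟨k'', by omega, h3⟩
  classical
  set k' := Nat.find hex with hk'
  obtain ⟨hlt, hlad⟩ := Nat.find_spec hex
  refine ⟨k', hlt, hlad, ?_, fun j hj hlj => Nat.find_min' hex ⟨hj, hlj⟩⟩
  have hle : k' ≤ k'' := Nat.find_min' hex ⟨by omega, h3⟩
  have : S w k' ≤ S w k'' := lad_mono hlad hle
  have h5 : S w (k + 1) = S w k + w k := S_succ' w k
  have h6 := hw1 k
  linarith

/-- If the next ladder point has value exactly `S w k + 1`, it must be `k + 1`. -/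
lemma next_lad_eq (hn : 0 < n) (hper : ∀ r, w (r + n) = w r) (hd0 : 0 ≤ S w n)
    (hw1 : ∀ r, w r ≤ 1) {k k' : ℕ} (hk : Lad w k) (hlt : k < k') (hlad : Lad w k')
    (hmin : ∀ j, k < j → Lad w j → k' ≤ j) (hval : S w k + 1 ≤ S w k') :
    k' = k + 1 ∧ S w (k + 1) = S w k + 1 := by
  -- every point strictly after k has value ≥ S w k + 1
  have key : ∀ r, k < r → S w k + 1 ≤ S w r := by
    intro r hr
    by_cases h : k' ≤ r
    · linarith [lad_mono hlad h]
    · by_contra hc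
      push_neg at hc
      obtain ⟨k₂, hb1, hb2, hb3, hb4⟩ := exists_lad hn hper hd0 r
      have : k' ≤ k₂ := hmin k₂ (by omega) hb3
      have := lad_mono hlad this
      linarith
  have h5 : S w (k + 1) = S w k + w k := S_succ' w k
  have h6 := hw1 k
  have h7 := key (k + 1) (by omega)
  have hSeq : S w (k + 1) = S w k + 1 := by linarith
  have hlad1 : Lad w (k + 1) := by
    intro r hr
    rcases Nat.eq_or_lt_of_le hr with h | h
    · rw [← h]
    · rw [hSeq]; exact key r (by omega)
  exact ⟨le_antisymm (hmin (k + 1) (by omega) hlad1) hlt, hSeq⟩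

lemma lad_add_n (hper : ∀ r, w (r + n) = w r) (hd0 : 0 ≤ S w n) {k : ℕ} (hk : Lad w k) :
    Lad w (k + n) := by
  intro r hr
  have h1 : r = (r - n) + n := by omega
  have h2 := S_add_n hper (r - n)
  rw [← h1] at h2
  rw [h2, S_add_n hper k]
  have := hk (r - n) (by omega)
  linarith

lemma lad_of_add_n (hper : ∀ r, w (r + n) = w r) {k : ℕ} (hk : Lad w (k + n)) :
    Lad w k := by
  intro r hr
  have := hk (r + n) (by omega)
  rw [S_add_n hper, S_add_n hper] at this
  linarith


open Classical in
/-- Main chain-building induction: starting from a ladder point `k₁` we find, for each `j`,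
at least `j+1` ladder points in `[k₁, k]` where `S w k ≤ S w k₁ + j`, with a strictness
disjunct used for the equality case. -/
lemma chain (hn : 0 < n) (hper : ∀ r, w (r + n) = w r) (hd0 : 0 ≤ S w n)
    (hw1 : ∀ r, w r ≤ 1) {k₁ : ℕ} (hk₁ : Lad w k₁) (j : ℕ) :
    ∃ k, k₁ ≤ k ∧ Lad w k ∧ S w k ≤ S w k₁ + j ∧ (k ≤ k₁ + j ∨ S w k < S w k₁ + j) ∧
      j + 1 ≤ ((Finset.Icc k₁ k).filter (Lad w)).card := by
  induction j with
  | zero =>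
      refine ⟨k₁, le_refl _, hk₁, by simp, Or.inl (by omega), ?_⟩
      have : k₁ ∈ (Finset.Icc k₁ k₁).filter (Lad w) := by
        simp [Finset.mem_filter, hk₁]
      calc 1 ≤ _ := Finset.card_le_card (Finset.singleton_subset_iff.mpr this)
  | succ j ih =>
      obtain ⟨k, hk1, hk2, hk3, hk4, hk5⟩ := ih
      obtain ⟨k', hlt, hlad, hval, hmin⟩ := exists_next_lad hn hper hd0 hw1 hk2
      have hcard : j + 2 ≤ ((Finset.Icc k₁ k').filter (Lad w)).card := by
        have hsub : insert k' ((Finset.Icc k₁ k).filter (Lad w)) ⊆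
            (Finset.Icc k₁ k').filter (Lad w) := by
          intro x hx
          rcases Finset.mem_insert.mp hx with rfl | hx
          · exact Finset.mem_filter.mpr ⟨Finset.mem_Icc.mpr ⟨by omega, le_refl _⟩, hlad⟩
          · rw [Finset.mem_filter, Finset.mem_Icc] at hx ⊢
            exact ⟨⟨hx.1.1, by omega⟩, hx.2⟩
        have hnot : k' ∉ (Finset.Icc k₁ k).filter (Lad w) := by
          rw [Finset.mem_filter, Finset.mem_Icc]
          push_neg
          intro h; omega
        have h1 := Finset.card_insert_of_notMem hnot
        have h2 := Finset.card_le_card hsub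
        omega
      refine ⟨k', by omega, hlad, by push_cast; linarith, ?_, hcard⟩
      rcases hk4 with h | h
      · -- previous point had position control
        by_cases hv : S w k + 1 ≤ S w k'
        · -- value jumped by exactly 1: next point is k + 1
          obtain ⟨he, _⟩ := next_lad_eq hn hper hd0 hw1 hk2 hlt hlad hmin hv
          exact Or.inl (by omega)
        · push_neg at hv
          refine Or.inr ?_
          push_cast
          linarith
      · refine Or.inr ?_
        push_cast
        linarith


lemma lad_mod (hn : 0 < n) (hper : ∀ r, w (r + n) = w r) {k : ℕ} (hk : Lad w k) :
    Lad w (k % n) := by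
  induction k using Nat.strong_induction_on with
  | _ k ih =>
    by_cases h : k < n
    · rwa [Nat.mod_eq_of_lt h]
    · have h1 : k = (k - n) + n := by omega
      have h2 : Lad w (k - n) := lad_of_add_n hper (by rwa [← h1])
      have h3 : k % n = (k - n) % n := by
        conv_lhs => rw [h1]
        rw [Nat.add_mod_right]
      rw [h3]
      exact ih (k - n) (by omega) h2

open Classical in
/-- The cycle lemma: if the total drift `d = S w n` over a period satisfies `0 ≤ d < n`
and all steps are `≤ 1`, then there are more than `d` ladder points in `[0, n)`. -/
lemma cycle_lemma (hn : 0 < n) (hper : ∀ r, w (r + n) = w r) (hd0 : 0 ≤ S w n)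
    (hdn : S w n < n) (hw1 : ∀ r, w r ≤ 1) :
    ⌊S w n⌋.toNat + 1 ≤ ((Finset.range n).filter (Lad w)).card := by
  obtain ⟨k₁, _, _, hk₁, _⟩ := exists_lad hn hper hd0 0
  set j := ⌊S w n⌋.toNat with hj
  have hjd : (j : ℝ) ≤ S w n := by
    have h0 : ((j : ℤ) : ℝ) = ((⌊S w n⌋ : ℤ) : ℝ) := by
      rw [hj, Int.toNat_of_nonneg (Int.floor_nonneg.mpr hd0)]
    rw [show ((j : ℕ) : ℝ) = ((j : ℤ) : ℝ) by push_cast; ring, h0]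
    exact Int.floor_le _
  obtain ⟨k, hk1, hk2, hk3, hk4, hk5⟩ := chain hn hper hd0 hw1 hk₁ j
  -- the endpoint stays within one period
  have hkn : k < k₁ + n := by
    by_contra hc
    push_neg at hc
    have hl : Lad w (k₁ + n) := lad_add_n hper hd0 hk₁
    have h1 : S w (k₁ + n) ≤ S w k := lad_mono hl hc
    rw [S_add_n hper] at h1
    rcases hk4 with h | h
    · have : (n : ℝ) ≤ j := by exact_mod_cast Nat.cast_le.mpr (by omega : n ≤ j)
      linarith
    · linarith
  -- transfer the count to `[0, n)` via `k ↦ k % n`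
  have hinj : Set.InjOn (· % n) ((Finset.Icc k₁ k).filter (Lad w) : Set ℕ) := by
    intro x hx y hy hxy
    simp only [Finset.coe_filter, Set.mem_setOf_eq, Finset.mem_Icc] at hx hy
    obtain ⟨⟨hx1, hx2⟩, -⟩ := hx
    obtain ⟨⟨hy1, hy2⟩, -⟩ := hy
    simp only at hxy
    rcases le_total x y with h | h
    · have hc := Nat.eq_zero_of_dvd_of_lt ((Nat.modEq_iff_dvd' h).mp hxy)
      omega
    · have hc := Nat.eq_zero_of_dvd_of_lt ((Nat.modEq_iff_dvd' h).mp hxy.symm)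
      omega
  have hmaps : ∀ x ∈ (Finset.Icc k₁ k).filter (Lad w),
      x % n ∈ (Finset.range n).filter (Lad w) := by
    intro x hx
    rw [Finset.mem_filter] at hx ⊢
    exact ⟨Finset.mem_range.mpr (Nat.mod_lt _ hn), lad_mod hn hper hx.2⟩
  have := Finset.card_le_card_of_injOn (· % n) hmaps hinj
  omega


/-- The step function associated to a vote sequence: `+1` for `A`, `-μ` for `B`,
extended periodically. -/
def wv (μ : ℝ) (n : ℕ) (v : Fin n → Bool) (i : ℕ) : ℝ :=
  if h : i % n < n then (if v ⟨i % n, h⟩ then 1 else -μ) else 0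

lemma wv_per (μ : ℝ) {n : ℕ} (v : Fin n → Bool) (r : ℕ) :
    wv μ n v (r + n) = wv μ n v r := by
  simp [wv, Nat.add_mod_right]

lemma wv_le_one (μ : ℝ) (hμ : 0 < μ) {n : ℕ} (v : Fin n → Bool) (r : ℕ) :
    wv μ n v r ≤ 1 := by
  unfold wv
  split_ifs <;> linarith

lemma range_filter {r n : ℕ} (h : r ≤ n) :
    (Finset.range n).filter (· < r) = Finset.range r := by
  ext j
  simp only [Finset.mem_filter, Finset.mem_range]
  omega

lemma count_eq (μ : ℝ) {n : ℕ} (v : Fin n → Bool) {r : ℕ} (hr : r ≤ n) :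
    (countA n v r : ℝ) - μ * (countB n v r : ℝ) = S (wv μ n v) r := by
  rw [countA, countB, Finset.card_filter, Finset.card_filter]
  push_cast
  rw [Finset.mul_sum, ← Finset.sum_sub_distrib]
  have hpt : ∀ i : Fin n,
      ((if i.val < r ∧ v i = true then (1:ℝ) else 0) -
        μ * (if i.val < r ∧ v i = false then (1:ℝ) else 0)) =
      (fun j => if j < r then wv μ n v j else 0) i.val := by
    intro i
    have hi : i.val % n = i.val := Nat.mod_eq_of_lt i.isLt
    by_cases h1 : i.val < r
    · have : wv μ n v i.val = if v i then 1 else -μ := by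
        have h2 : i.val % n < n := by rw [hi]; exact i.isLt
        have h3 : (⟨i.val % n, h2⟩ : Fin n) = i := Fin.ext hi
        rw [wv, dif_pos h2, h3]
      cases hv : v i <;> simp [h1, hv, this]
    · simp [h1]
  rw [Finset.sum_congr rfl (fun i _ => hpt i)]
  rw [Fin.sum_univ_eq_sum_range (fun j => if j < r then wv μ n v j else 0) n]
  rw [← Finset.sum_filter, range_filter hr, S]


section Rot

variable {n : ℕ} [NeZero n]

/-- The rotation shift as an element of `Fin n`. -/
def rotc (k : ℕ) : Fin n := ⟨k % n, Nat.mod_lt _ (Nat.pos_of_ne_zero (NeZero.ne n))⟩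

/-- Rotation of a vote sequence by `k` places. -/
def rot (k : ℕ) (v : Fin n → Bool) : Fin n → Bool := fun i => v (i + rotc k)

lemma rot_wv (μ : ℝ) (k : ℕ) (v : Fin n → Bool) (j : ℕ) :
    wv μ n (rot k v) j = wv μ n v (j + k) := by
  have hn : 0 < n := Nat.pos_of_ne_zero (NeZero.ne n)
  have h1 : j % n < n := Nat.mod_lt _ hn
  have h2 : (j + k) % n < n := Nat.mod_lt _ hn
  rw [wv, wv, dif_pos h1, dif_pos h2]
  have h3 : ((⟨j % n, h1⟩ : Fin n) + rotc k) = ⟨(j + k) % n, h2⟩ := by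
    apply Fin.ext
    rw [Fin.val_add]
    show (j % n + k % n) % n = (j + k) % n
    rw [← Nat.add_mod]
  rw [rot, h3]

lemma S_rot (μ : ℝ) (k : ℕ) (v : Fin n → Bool) (r : ℕ) :
    S (wv μ n (rot k v)) r = S (wv μ n v) (k + r) - S (wv μ n v) k := by
  rw [S_add (wv μ n v) k r]
  have : ∀ j, wv μ n (rot k v) j = wv μ n v (k + j) := by
    intro j; rw [rot_wv, Nat.add_comm]
  simp only [S, this]
  ring

lemma countA_top (v : Fin n → Bool) :
    countA n v n = (Finset.univ.filter (fun i => v i = true)).card := by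
  unfold countA
  congr 1
  apply Finset.filter_congr
  intro i _
  simp [Fin.is_lt]

lemma countB_top (v : Fin n → Bool) :
    countB n v n = (Finset.univ.filter (fun i => v i = false)).card := by
  unfold countB
  congr 1
  apply Finset.filter_congr
  intro i _
  simp [Fin.is_lt]

lemma countA_add_countB (v : Fin n → Bool) :
    countA n v n + countB n v n = n := by
  classical
  rw [countA_top, countB_top]
  have h := Finset.card_filter_add_card_filter_not
    (s := (Finset.univ : Finset (Fin n))) (p := fun i => v i = true)
  have h2 : Finset.univ.filter (fun i => ¬ (v i = true)) =
      Finset.univ.filter (fun i => v i = false) := by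
    apply Finset.filter_congr
    intro i _
    simp
  rw [h2] at h
  simpa using h

lemma countA_rot (k : ℕ) (v : Fin n → Bool) :
    countA n (rot k v) n = countA n v n := by
  classical
  rw [countA_top, countA_top]
  apply Finset.card_bij' (fun i _ => i + rotc k) (fun j _ => j - rotc k)
  · intro i _
    exact add_sub_cancel_right i (rotc k)
  · intro j _
    exact sub_add_cancel j (rotc k)
  · intro i hi
    simp only [Finset.mem_filter, Finset.mem_univ, true_and] at hi ⊢
    exact hi
  · intro j hj
    simp only [Finset.mem_filter, Finset.mem_univ, true_and] at hj ⊢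
    show v (j - rotc k + rotc k) = true
    rwa [sub_add_cancel]

lemma rot_rot_inv (k : ℕ) (u : Fin n → Bool) :
    rot k (fun i => u (i - rotc k)) = u := by
  funext i
  show u (i + rotc k - rotc k) = u i
  rw [add_sub_cancel_right]

lemma rot_inj (k : ℕ) {v v' : Fin n → Bool} (h : rot k v = rot k v') : v = v' := by
  funext i
  have := congrFun h (i - rotc k)
  simpa [rot, sub_add_cancel] using this

lemma card_filter_lt {n a : ℕ} (h : a ≤ n) :
    (Finset.univ.filter (fun i : Fin n => i.val < a)).card = a := by
  classical
  rw [Finset.card_filter]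
  rw [Fin.sum_univ_eq_sum_range (fun j => if j < a then (1:ℕ) else 0) n]
  rw [← Finset.card_filter, range_filter h, Finset.card_range]

end Rot

end BallotAux

open Classical in
theorem ballot_weak_lower_bound (μ : ℝ) (a b : ℕ) (hμ : 0 < μ) (ha : 0 < a) (hb : 0 < b)
    (hab : μ * b ≤ a) :
    ((⌊(a : ℝ) - μ * b + 1⌋ : ℝ)) / ((a : ℝ) + b)
      ≤ (((Finset.univ.filter (fun v : Fin (a + b) → Bool =>
        countA (a + b) v (a + b) = a ∧
        ∀ r, 1 ≤ r → r ≤ a + b →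
          μ * (countB (a + b) v r : ℝ) ≤ (countA (a + b) v r : ℝ))).card : ℝ) /
      ((Finset.univ.filter (fun v : Fin (a + b) → Bool =>
        countA (a + b) v (a + b) = a)).card : ℝ)) := by
  open Finset BallotAux in
  set n := a + b with hn'
  have hn : 0 < n := by omega
  haveI : NeZero n := ⟨by omega⟩
  set P : (Fin n → Bool) → Prop := fun v => countA n v n = a ∧
      ∀ r, 1 ≤ r → r ≤ n → μ * (countB n v r : ℝ) ≤ (countA n v r : ℝ) with hP
  set G := Finset.univ.filter P with hG
  set D := Finset.univ.filter (fun v : Fin n → Bool => countA n v n = a) with hD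
  -- the drift of the walk of any sequence in `D`
  have drift : ∀ v : Fin n → Bool, countA n v n = a → S (wv μ n v) n = (a : ℝ) - μ * b := by
    intro v hv
    have hc := count_eq μ v (le_refl n)
    have hB : countB n v n = b := by have := countA_add_countB v; omega
    rw [hv, hB] at hc
    exact hc.symm
  have hd0 : ∀ v : Fin n → Bool, countA n v n = a → 0 ≤ S (wv μ n v) n := by
    intro v hv; rw [drift v hv]; linarith
  have hdn : ∀ v : Fin n → Bool, countA n v n = a → S (wv μ n v) n < n := by
    intro v hv; rw [drift v hv]
    have : 0 < μ * b := by positivity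
    push_cast [hn']
    linarith
  -- rotations at ladder points are good
  have good : ∀ v : Fin n → Bool, countA n v n = a →
      ∀ k, Lad (wv μ n v) k → P (rot k v) := by
    intro v hv k hl
    have hA : countA n (rot k v) n = a := by rw [countA_rot, hv]
    refine ⟨hA, fun r hr1 hr2 => ?_⟩
    have hc := count_eq μ (rot k v) hr2
    rw [S_rot] at hc
    have := hl (k + r) (by omega)
    linarith
  set t : ℕ := (⌊(a : ℝ) - μ * b⌋).toNat + 1 with ht
  -- the per-sequence count of good rotations
  have perv : ∀ v ∈ D, t ≤ ((Finset.range n).filter (fun k => rot k v ∈ G)).card := by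
    intro v hv
    have hv' : countA n v n = a := (Finset.mem_filter.mp hv).2
    have hcl := cycle_lemma hn (wv_per μ v) (hd0 v hv') (hdn v hv') (wv_le_one μ hμ v)
    rw [drift v hv'] at hcl
    refine le_trans hcl (Finset.card_le_card ?_)
    intro k hk
    rw [Finset.mem_filter] at hk ⊢
    refine ⟨hk.1, ?_⟩
    rw [hG, Finset.mem_filter]
    exact ⟨Finset.mem_univ _, good v hv' k hk.2⟩
  -- double counting
  have swap : ∑ v ∈ D, ((Finset.range n).filter (fun k => rot k v ∈ G)).card
      = n * G.card := by
    have h1 : ∀ v, ((Finset.range n).filter (fun k => rot k v ∈ G)).card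
        = ∑ k ∈ Finset.range n, if rot k v ∈ G then 1 else 0 := by
      intro v; rw [Finset.card_filter]
    simp only [h1]
    rw [Finset.sum_comm]
    have h2 : ∀ k, (∑ v ∈ D, if rot k v ∈ G then 1 else 0)
        = (D.filter (fun v => rot k v ∈ G)).card := by
      intro k; rw [Finset.card_filter]
    simp only [h2]
    have h3 : ∀ k, (D.filter (fun v => rot k v ∈ G)).card = G.card := by
      intro k
      apply Finset.card_bij' (fun v _ => rot k v) (fun u _ => fun i => u (i - rotc k))
      · intro v _
        funext i
        show v (i - rotc k + rotc k) = v i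
        rw [sub_add_cancel]
      · intro u _
        exact rot_rot_inv k u
      · intro v hv
        exact (Finset.mem_filter.mp hv).2
      · intro u hu
        rw [Finset.mem_filter]
        have huG := hu
        rw [hG, Finset.mem_filter, hP] at huG
        have hA : countA n (fun i => u (i - rotc k)) n = a := by
          have := countA_rot (n := n) k (fun i => u (i - rotc k))
          rw [rot_rot_inv k u] at this
          rw [← this]
          exact huG.2.1
        refine ⟨Finset.mem_filter.mpr ⟨Finset.mem_univ _, hA⟩, ?_⟩
        rw [rot_rot_inv k u]
        exact hu
    simp only [h3]
    rw [Finset.sum_const, Finset.card_range, smul_eq_mul]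
  have main : t * D.card ≤ n * G.card := by
    calc t * D.card = ∑ _v ∈ D, t := by rw [Finset.sum_const, smul_eq_mul, mul_comm]
      _ ≤ ∑ v ∈ D, ((Finset.range n).filter (fun k => rot k v ∈ G)).card :=
          Finset.sum_le_sum perv
      _ = n * G.card := swap
  -- `D` is nonempty
  have hDpos : 0 < D.card := by
    have hv0 : (fun i : Fin n => decide (i.val < a)) ∈ D := by
      rw [hD, Finset.mem_filter]
      refine ⟨Finset.mem_univ _, ?_⟩
      rw [countA_top]
      have : (Finset.univ.filter (fun i : Fin n => decide (i.val < a) = true))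
          = Finset.univ.filter (fun i : Fin n => i.val < a) := by
        apply Finset.filter_congr; intro i _; simp
      rw [this, card_filter_lt (by omega)]
    exact Finset.card_pos.mpr ⟨_, hv0⟩
  -- final arithmetic
  have hfloor : (⌊(a : ℝ) - μ * b + 1⌋ : ℝ) = (t : ℝ) := by
    have h0 : ((⌊(a:ℝ) - μ * b⌋).toNat : ℤ) = ⌊(a:ℝ) - μ * b⌋ :=
      Int.toNat_of_nonneg (Int.floor_nonneg.mpr (by linarith : (0:ℝ) ≤ (a:ℝ) - μ * b))
    have h1 : (((⌊(a:ℝ) - μ * b⌋).toNat : ℕ) : ℝ) = ((⌊(a:ℝ) - μ * b⌋ : ℤ) : ℝ) := by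
      exact_mod_cast congrArg (fun z : ℤ => (z : ℝ)) h0
    rw [Int.floor_add_one, ht]
    push_cast
    rw [h1]
  have final_my : ((t : ℝ)) / ((a : ℝ) + b) ≤ (G.card : ℝ) / (D.card : ℝ) := by
    rw [div_le_div_iff₀ (by push_cast [hn']; positivity) (by exact_mod_cast hDpos)]
    calc (t : ℝ) * D.card ≤ (n : ℝ) * G.card := by exact_mod_cast main
      _ = (G.card : ℝ) * ((a : ℝ) + b) := by push_cast [hn']; ring
  rw [hfloor]
  convert final_my using 3
  rw [hG]
  simp only [hP]
  congr!
end

section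
/- Let μ be a positive real number and a, b positive integers. For any fixed sequence of a votes for A and b votes for B, at least ⌊a - μb + 1⌋ of its a+b cyclic permutations satisfy a_r ≥ μ·b_r for all r (provided a ≥ μb). -/
/-- Cyclic permutation moving the first `i` votes to the end. -/
def cyc {n : ℕ} (v : Fin n → Bool) (i : ℕ) : Fin n → Bool :=
  fun j => v ⟨(j.val + i) % n, Nat.mod_lt _ (Nat.lt_of_le_of_lt (Nat.zero_le j.val) j.isLt)⟩

namespace CycAux

variable {n : ℕ}

/-- weight of position m in the periodic extension -/
def wt (μ : ℝ) (v : Fin n → Bool) (hn : 0 < n) (m : ℕ) : ℝ :=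
  if v ⟨m % n, Nat.mod_lt _ hn⟩ then 1 else -μ

/-- partial sums -/
def psum (μ : ℝ) (v : Fin n → Bool) (hn : 0 < n) : ℕ → ℝ
  | 0 => 0
  | m+1 => psum μ v hn m + wt μ v hn m

lemma wt_le_one {μ : ℝ} (hμ : 0 < μ) (v : Fin n → Bool) (hn : 0 < n) (m : ℕ) :
    wt μ v hn m ≤ 1 := by
  unfold wt; split <;> nlinarith

lemma wt_cases (μ : ℝ) (v : Fin n → Bool) (hn : 0 < n) (m : ℕ) :
    wt μ v hn m = 1 ∨ wt μ v hn m = -μ := by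
  unfold wt; split <;> simp

lemma wt_period (μ : ℝ) (v : Fin n → Bool) (hn : 0 < n) (m : ℕ) :
    wt μ v hn (m + n) = wt μ v hn m := by
  simp [wt, Nat.add_mod_right]

lemma psum_add_n (μ : ℝ) (v : Fin n → Bool) (hn : 0 < n) (m : ℕ) :
    psum μ v hn (m + n) = psum μ v hn m + psum μ v hn n := by
  induction m with
  | zero => simp [psum]
  | succ m ih =>
      have h : m + 1 + n = (m + n) + 1 := by omega
      rw [h]
      show psum μ v hn (m + n) + wt μ v hn (m + n) = _
      rw [ih, wt_period]
      show _ = psum μ v hn m + wt μ v hn m + psum μ v hn n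
      ring

lemma psum_add_mul (μ : ℝ) (v : Fin n → Bool) (hn : 0 < n) (m q : ℕ) :
    psum μ v hn (m + q * n) = psum μ v hn m + q * psum μ v hn n := by
  induction q with
  | zero => simp
  | succ q ih =>
      have h : m + (q + 1) * n = (m + q * n) + n := by ring
      rw [h, psum_add_n, ih]
      push_cast
      ring

lemma countA_zero (f : Fin n → Bool) : countA n f 0 = 0 := by simp [countA]
lemma countB_zero (f : Fin n → Bool) : countB n f 0 = 0 := by simp [countB]

lemma countA_succ (f : Fin n → Bool) {r : ℕ} (hr : r < n) :
    countA n f (r+1) = countA n f r + (if f ⟨r, hr⟩ = true then 1 else 0) := by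
  unfold countA
  by_cases h : f ⟨r, hr⟩ = true
  · rw [if_pos h]
    have hset : (Finset.univ.filter (fun i : Fin n => i.val < r + 1 ∧ f i = true))
        = insert ⟨r, hr⟩ (Finset.univ.filter (fun i : Fin n => i.val < r ∧ f i = true)) := by
      ext i
      simp only [Finset.mem_filter, Finset.mem_univ, true_and, Finset.mem_insert]
      constructor
      · rintro ⟨hi, hfi⟩
        rcases Nat.lt_succ_iff_lt_or_eq.mp hi with h' | h'
        · exact Or.inr ⟨h', hfi⟩
        · exact Or.inl (Fin.ext h')
      · rintro (rfl | ⟨hi, hfi⟩)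
        · exact ⟨Nat.lt_succ_self r, h⟩
        · exact ⟨Nat.lt_succ_of_lt hi, hfi⟩
    rw [hset, Finset.card_insert_of_notMem (by simp)]

  · rw [if_neg h]
    have hset : (Finset.univ.filter (fun i : Fin n => i.val < r + 1 ∧ f i = true))
        = (Finset.univ.filter (fun i : Fin n => i.val < r ∧ f i = true)) := by
      ext i
      simp only [Finset.mem_filter, Finset.mem_univ, true_and]
      constructor
      · rintro ⟨hi, hfi⟩
        rcases Nat.lt_succ_iff_lt_or_eq.mp hi with h' | h'
        · exact ⟨h', hfi⟩
        · exact absurd hfi (by rwa [show i = ⟨r, hr⟩ from Fin.ext h'])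
      · rintro ⟨hi, hfi⟩; exact ⟨Nat.lt_succ_of_lt hi, hfi⟩
    rw [hset]; omega

lemma countB_succ (f : Fin n → Bool) {r : ℕ} (hr : r < n) :
    countB n f (r+1) = countB n f r + (if f ⟨r, hr⟩ = true then 0 else 1) := by
  unfold countB
  by_cases h : f ⟨r, hr⟩ = true
  · rw [if_pos h]
    have hset : (Finset.univ.filter (fun i : Fin n => i.val < r + 1 ∧ f i = false))
        = (Finset.univ.filter (fun i : Fin n => i.val < r ∧ f i = false)) := by
      ext i
      simp only [Finset.mem_filter, Finset.mem_univ, true_and]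
      constructor
      · rintro ⟨hi, hfi⟩
        rcases Nat.lt_succ_iff_lt_or_eq.mp hi with h' | h'
        · exact ⟨h', hfi⟩
        · rw [show i = ⟨r, hr⟩ from Fin.ext h'] at hfi; rw [h] at hfi; simp at hfi
      · rintro ⟨hi, hfi⟩; exact ⟨Nat.lt_succ_of_lt hi, hfi⟩
    rw [hset]; omega
  · rw [if_neg h]
    have hb : f ⟨r, hr⟩ = false := Bool.not_eq_true _ |>.mp h
    have hset : (Finset.univ.filter (fun i : Fin n => i.val < r + 1 ∧ f i = false))
        = insert ⟨r, hr⟩ (Finset.univ.filter (fun i : Fin n => i.val < r ∧ f i = false)) := by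
      ext i
      simp only [Finset.mem_filter, Finset.mem_univ, true_and, Finset.mem_insert]
      constructor
      · rintro ⟨hi, hfi⟩
        rcases Nat.lt_succ_iff_lt_or_eq.mp hi with h' | h'
        · exact Or.inr ⟨h', hfi⟩
        · exact Or.inl (Fin.ext h')
      · rintro (rfl | ⟨hi, hfi⟩)
        · exact ⟨Nat.lt_succ_self r, hb⟩
        · exact ⟨Nat.lt_succ_of_lt hi, hfi⟩
    rw [hset, Finset.card_insert_of_notMem (by simp)]


lemma count_full (f : Fin n → Bool) : countA n f n + countB n f n = n := by
  unfold countA countB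
  have h1 : (Finset.univ.filter (fun i : Fin n => i.val < n ∧ f i = true))
      = Finset.univ.filter (fun i : Fin n => f i = true) := by
    ext i; simp [i.isLt]
  have h2 : (Finset.univ.filter (fun i : Fin n => i.val < n ∧ f i = false))
      = Finset.univ.filter (fun i : Fin n => ¬ (f i = true)) := by
    ext i; simp [i.isLt, Bool.not_eq_true]
  rw [h1, h2, Finset.card_filter_add_card_filter_not]
  simp


lemma count_sum (μ : ℝ) (v : Fin n → Bool) (hn : 0 < n) (i : ℕ) :
    ∀ r, r ≤ n →
      psum μ v hn (i + r) =
        psum μ v hn i + (countA n (cyc v i) r : ℝ) - μ * (countB n (cyc v i) r : ℝ) := by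
  intro r
  induction r with
  | zero => intro _; simp [countA_zero, countB_zero]
  | succ r ih =>
      intro hr
      have hrn : r < n := by omega
      have h1 : i + (r + 1) = (i + r) + 1 := by omega
      rw [h1]
      show psum μ v hn (i + r) + wt μ v hn (i + r) = _
      rw [ih (le_of_lt hrn), countA_succ (cyc v i) hrn, countB_succ (cyc v i) hrn]
      have hcyc : cyc v i ⟨r, hrn⟩ = v ⟨(i + r) % n, Nat.mod_lt _ hn⟩ := by
        simp [cyc, Nat.add_comm r i]
      by_cases h : v ⟨(i + r) % n, Nat.mod_lt _ hn⟩ = true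
      · rw [hcyc] at *
        simp only [h, if_pos]
        have : wt μ v hn (i + r) = 1 := by simp [wt, h]
        rw [this]
        push_cast
        ring
      · have hcv : cyc v i ⟨r, hrn⟩ = false := by rw [hcyc]; exact Bool.not_eq_true _ |>.mp h
        simp only [hcv, Bool.false_eq_true, if_false]
        have : wt μ v hn (i + r) = -μ := by simp [wt, h]
        rw [this]
        push_cast
        ring

lemma cyc_zero (v : Fin n → Bool) : cyc v 0 = v := by
  funext j
  simp only [cyc, Nat.add_zero, Nat.mod_eq_of_lt j.isLt]

lemma psum_n (μ : ℝ) (v : Fin n → Bool) (hn : 0 < n) :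
    psum μ v hn n = (countA n v n : ℝ) - μ * (countB n v n : ℝ) := by
  have h := count_sum μ v hn 0 n le_rfl
  rw [cyc_zero] at h
  simpa [psum] using h

attribute [local instance] Classical.propDecidable

lemma exists_min (μ : ℝ) (v : Fin n → Bool) (hn : 0 < n) (m : ℕ) :
    ∃ j, (m < j ∧ j ≤ m + n) ∧
      ∀ j', m < j' → j' ≤ m + n → psum μ v hn j ≤ psum μ v hn j' := by
  obtain ⟨j, hj, hmin⟩ := Finset.exists_min_image (Finset.Icc (m+1) (m+n))
    (psum μ v hn) ⟨m+1, by rw [Finset.mem_Icc]; omega⟩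
  rw [Finset.mem_Icc] at hj
  refine ⟨j, ⟨by omega, hj.2⟩, fun j' h1 h2 => ?_⟩
  exact hmin j' (by rw [Finset.mem_Icc]; omega)

open Classical in
noncomputable def nxt (μ : ℝ) (v : Fin n → Bool) (hn : 0 < n) (m : ℕ) : ℕ :=
  Nat.find (exists_min μ v hn m)

lemma nxt_gt (μ : ℝ) (v : Fin n → Bool) (hn : 0 < n) (m : ℕ) : m < nxt μ v hn m :=
  (Nat.find_spec (exists_min μ v hn m)).1.1

lemma nxt_le (μ : ℝ) (v : Fin n → Bool) (hn : 0 < n) (m : ℕ) : nxt μ v hn m ≤ m + n :=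
  (Nat.find_spec (exists_min μ v hn m)).1.2

lemma nxt_min (μ : ℝ) (v : Fin n → Bool) (hn : 0 < n) (m : ℕ) :
    ∀ j', m < j' → j' ≤ m + n → psum μ v hn (nxt μ v hn m) ≤ psum μ v hn j' :=
  (Nat.find_spec (exists_min μ v hn m)).2

lemma nxt_first (μ : ℝ) (v : Fin n → Bool) (hn : 0 < n) (m : ℕ) {j : ℕ}
    (h1 : m < j) (h2 : j ≤ m + n)
    (h3 : ∀ j', m < j' → j' ≤ m + n → psum μ v hn j ≤ psum μ v hn j') :
    nxt μ v hn m ≤ j :=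
  Nat.find_min' (exists_min μ v hn m) ⟨⟨h1, h2⟩, h3⟩

/-- `nxt m` is a global future minimum among indices beyond `m`. -/
lemma nxt_fm (μ : ℝ) (v : Fin n → Bool) (hn : 0 < n) (hT : 0 ≤ psum μ v hn n) (m : ℕ) :
    ∀ m', m < m' → psum μ v hn (nxt μ v hn m) ≤ psum μ v hn m' := by
  intro m'
  induction m' using Nat.strong_induction_on with
  | _ m' ih =>
      intro hm'
      by_cases h : m' ≤ m + n
      · exact nxt_min μ v hn m m' hm' h
      · have h1 : m < m' - n := by omega
        have h2 : m' - n < m' := by omega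
        have h3 : psum μ v hn m' = psum μ v hn (m' - n) + psum μ v hn n := by
          rw [← psum_add_n μ v hn (m' - n)]
          congr 1
          omega
        have := ih (m' - n) h2 h1
        linarith

lemma nxt_ub (μ : ℝ) (hμ : 0 < μ) (v : Fin n → Bool) (hn : 0 < n) (m : ℕ) :
    psum μ v hn (nxt μ v hn m) ≤ psum μ v hn m + 1 := by
  have h := nxt_min μ v hn m (m + 1) (by omega) (by omega)
  have h2 : psum μ v hn (m + 1) = psum μ v hn m + wt μ v hn m := rfl
  have h3 := wt_le_one hμ v hn m
  linarith

lemma nxt_eq_succ (μ : ℝ) (hμ : 0 < μ) (v : Fin n → Bool) (hn : 0 < n)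
    (hT : 0 ≤ psum μ v hn n) (m : ℕ)
    (h : psum μ v hn m + 1 ≤ psum μ v hn (nxt μ v hn m)) :
    nxt μ v hn m = m + 1 := by
  have h1 : psum μ v hn (m + 1) = psum μ v hn m + wt μ v hn m := rfl
  have h2 := nxt_fm μ v hn hT m (m + 1) (by omega)
  have hw : wt μ v hn m = 1 := by
    rcases wt_cases μ v hn m with h' | h'
    · exact h'
    · exfalso; rw [h'] at h1; linarith
  rw [hw] at h1
  have heq : psum μ v hn (nxt μ v hn m) = psum μ v hn (m + 1) := by linarith
  have hle : nxt μ v hn m ≤ m + 1 := by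
    apply nxt_first μ v hn m (by omega) (by omega)
    intro j' hj1 hj2
    rw [← heq]
    exact nxt_min μ v hn m j' hj1 hj2
  have := nxt_gt μ v hn m
  omega

noncomputable def mseq (μ : ℝ) (v : Fin n → Bool) (hn : 0 < n) : ℕ → ℕ
  | 0 => nxt μ v hn 0
  | c+1 => nxt μ v hn (mseq μ v hn c)

lemma mseq_fm (μ : ℝ) (v : Fin n → Bool) (hn : 0 < n) (hT : 0 ≤ psum μ v hn n) (c : ℕ) :
    ∀ m', mseq μ v hn c ≤ m' → psum μ v hn (mseq μ v hn c) ≤ psum μ v hn m' := by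
  intro m' hm'
  rcases eq_or_lt_of_le hm' with rfl | h
  · exact le_rfl
  · cases c with
    | zero => exact nxt_fm μ v hn hT 0 m' (lt_trans (nxt_gt μ v hn 0) h)
    | succ c =>
        show psum μ v hn (nxt μ v hn (mseq μ v hn c)) ≤ psum μ v hn m'
        exact nxt_fm μ v hn hT (mseq μ v hn c) m' (lt_trans (nxt_gt μ v hn (mseq μ v hn c)) h)

lemma mseq_succ_gt (μ : ℝ) (v : Fin n → Bool) (hn : 0 < n) (c : ℕ) :
    mseq μ v hn c < mseq μ v hn (c+1) := nxt_gt μ v hn (mseq μ v hn c)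

lemma mseq_strictMono (μ : ℝ) (v : Fin n → Bool) (hn : 0 < n) : StrictMono (mseq μ v hn) :=
  strictMono_nat_of_lt_succ (mseq_succ_gt μ v hn)

lemma mseq_chain (μ : ℝ) (hμ : 0 < μ) (v : Fin n → Bool) (hn : 0 < n) (c : ℕ) :
    psum μ v hn (mseq μ v hn c) ≤ psum μ v hn (mseq μ v hn 0) + c := by
  induction c with
  | zero => simp
  | succ c ih =>
      have := nxt_ub μ hμ v hn (mseq μ v hn c)
      have h2 : mseq μ v hn (c+1) = nxt μ v hn (mseq μ v hn c) := rfl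
      rw [h2]
      push_cast
      linarith

lemma mseq_gap (μ : ℝ) (hμ : 0 < μ) (v : Fin n → Bool) (hn : 0 < n) (j : ℕ) :
    psum μ v hn (mseq μ v hn (j+1)) - psum μ v hn (mseq μ v hn j) ≤ 1 := by
  have := nxt_ub μ hμ v hn (mseq μ v hn j)
  have h2 : mseq μ v hn (j+1) = nxt μ v hn (mseq μ v hn j) := rfl
  rw [h2]; linarith

/-- Key lemma: the first K+1 future minima stay within one period of the first. -/
lemma mseq_window (μ : ℝ) (hμ : 0 < μ) (v : Fin n → Bool) (hn : 0 < n)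
    (hT : 0 ≤ psum μ v hn n) (K : ℕ) (hKT : (K : ℝ) ≤ psum μ v hn n) (hKn : K < n) :
    ∀ c ≤ K, mseq μ v hn c < mseq μ v hn 0 + n := by
  by_contra hcon
  push_neg at hcon
  have hex : ∃ c, c ≤ K ∧ mseq μ v hn 0 + n ≤ mseq μ v hn c := by
    obtain ⟨c, h1, h2⟩ := hcon; exact ⟨c, h1, h2⟩
  have hc₀K : Nat.find hex ≤ K := (Nat.find_spec hex).1
  have hc₀ : mseq μ v hn 0 + n ≤ mseq μ v hn (Nat.find hex) := (Nat.find_spec hex).2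
  have hc₀ne : Nat.find hex ≠ 0 := by
    intro h
    rw [h] at hc₀
    omega
  obtain ⟨c', hc'eq⟩ : ∃ c', Nat.find hex = c' + 1 := ⟨Nat.find hex - 1, by omega⟩
  rw [hc'eq] at hc₀K hc₀
  have hc'lt : mseq μ v hn c' < mseq μ v hn 0 + n := by
    have := Nat.find_min hex (m := c') (by omega)
    push_neg at this
    exact this (by omega)
  have hmono0 : mseq μ v hn 0 ≤ mseq μ v hn c' :=
    (mseq_strictMono μ v hn).monotone (Nat.zero_le c')
  set T := psum μ v hn n with hTdef
  -- upper bound : psum (mseq c₀) ≤ psum (mseq 0) + T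
  have hub : psum μ v hn (mseq μ v hn (c'+1)) ≤ psum μ v hn (mseq μ v hn 0) + T := by
    have h1 : mseq μ v hn (c'+1) = nxt μ v hn (mseq μ v hn c') := rfl
    have h2 := nxt_min μ v hn (mseq μ v hn c') (mseq μ v hn 0 + n) hc'lt (by omega)
    rw [psum_add_n μ v hn (mseq μ v hn 0)] at h2
    rw [h1]; exact h2
  -- lower bound
  have hlb : psum μ v hn (mseq μ v hn 0) + T ≤ psum μ v hn (mseq μ v hn (c'+1)) := by
    have h1 : mseq μ v hn (c'+1) = (mseq μ v hn (c'+1) - n) + n := by omega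
    have h2 : psum μ v hn (mseq μ v hn (c'+1)) = psum μ v hn (mseq μ v hn (c'+1) - n) + T := by
      rw [← psum_add_n μ v hn (mseq μ v hn (c'+1) - n), ← h1]
    have h3 : mseq μ v hn 0 ≤ mseq μ v hn (c'+1) - n := by omega
    have h4 := mseq_fm μ v hn hT 0 _ h3
    linarith
  have heqT : psum μ v hn (mseq μ v hn (c'+1)) = psum μ v hn (mseq μ v hn 0) + T :=
    le_antisymm hub hlb
  -- T ≤ c₀
  have hchain := mseq_chain μ hμ v hn (c'+1)
  have hTc : T ≤ (c'+1 : ℝ) := by push_cast at hchain ⊢; linarith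
  have hceq : c' + 1 = K := by
    have : (K : ℝ) ≤ (c' + 1 : ℝ) := le_trans hKT hTc
    have h1 : K ≤ c' + 1 := by exact_mod_cast this
    omega
  have hTK : T = (K : ℝ) := by
    rw [← hceq] at hKT
    push_cast at hKT ⊢
    rw [← hceq]
    push_cast
    linarith
  -- telescoping : sum of gaps = T = c₀
  have htel : ∑ j ∈ Finset.range (c'+1),
      (psum μ v hn (mseq μ v hn (j+1)) - psum μ v hn (mseq μ v hn j))
      = psum μ v hn (mseq μ v hn (c'+1)) - psum μ v hn (mseq μ v hn 0) :=
    Finset.sum_range_sub (fun j => psum μ v hn (mseq μ v hn j)) (c'+1)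
  have hsum : ∑ j ∈ Finset.range (c'+1),
      (psum μ v hn (mseq μ v hn (j+1)) - psum μ v hn (mseq μ v hn j)) = (c'+1 : ℝ) := by
    rw [htel, heqT, hTK, ← hceq]
    push_cast
    ring
  -- every gap equals 1
  have hgap1 : ∀ j < c' + 1,
      psum μ v hn (mseq μ v hn j) + 1 ≤ psum μ v hn (mseq μ v hn (j+1)) := by
    by_contra hg
    push_neg at hg
    obtain ⟨j, hj, hjlt⟩ := hg
    have hlt : ∑ x ∈ Finset.range (c'+1),
        (psum μ v hn (mseq μ v hn (x+1)) - psum μ v hn (mseq μ v hn x))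
        < ∑ _x ∈ Finset.range (c'+1), (1 : ℝ) := by
      apply Finset.sum_lt_sum
      · intro i _
        exact mseq_gap μ hμ v hn i
      · exact ⟨j, Finset.mem_range.mpr hj, by linarith⟩
    rw [hsum] at hlt
    simp at hlt
  -- hence mseq j = mseq 0 + j for j ≤ c₀
  have hstep : ∀ j < c' + 1, mseq μ v hn (j+1) = mseq μ v hn j + 1 := by
    intro j hj
    have h1 : mseq μ v hn (j+1) = nxt μ v hn (mseq μ v hn j) := rfl
    rw [h1]
    exact nxt_eq_succ μ hμ v hn hT _ (by rw [← h1]; exact hgap1 j hj)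
  have hlin : ∀ j ≤ c' + 1, mseq μ v hn j = mseq μ v hn 0 + j := by
    intro j
    induction j with
    | zero => simp
    | succ j ih =>
        intro hj
        rw [hstep j (by omega), ih (by omega)]
        omega
  have := hlin (c'+1) le_rfl
  omega

lemma good_residue (μ : ℝ) (v : Fin n → Bool) (hn : 0 < n) (m : ℕ)
    (hm : ∀ m', m ≤ m' → psum μ v hn m ≤ psum μ v hn m') (r : ℕ) :
    psum μ v hn (m % n) ≤ psum μ v hn (m % n + r) := by
  have hmod : m % n + m / n * n = m := Nat.mod_add_div' m n
  have h1 : psum μ v hn m = psum μ v hn (m % n) + ((m / n : ℕ) : ℝ) * psum μ v hn n := by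
    rw [← psum_add_mul μ v hn (m % n) (m / n), hmod]
  have h2 : psum μ v hn (m + r) =
      psum μ v hn (m % n + r) + ((m / n : ℕ) : ℝ) * psum μ v hn n := by
    rw [← psum_add_mul μ v hn (m % n + r) (m / n)]
    congr 1
    omega
  have h3 := hm (m + r) (by omega)
  linarith

end CycAux

open CycAux

open Classical in
theorem cyclic_weak_count (μ : ℝ) (a b : ℕ) (hμ : 0 < μ) (ha : 0 < a) (hb : 0 < b)
    (hab : μ * b ≤ a) (v : Fin (a + b) → Bool) (hA : countA (a + b) v (a + b) = a) :
    (⌊(a : ℝ) - μ * b + 1⌋ : ℤ) ≤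
      ((Finset.range (a + b)).filter (fun i =>
        ∀ r, 1 ≤ r → r ≤ a + b →
          μ * (countB (a + b) (cyc v i) r : ℝ) ≤ (countA (a + b) (cyc v i) r : ℝ))).card := by
  have hn : 0 < a + b := by omega
  have hcB : countB (a + b) v (a + b) = b := by
    have := count_full v
    omega
  have hTval : psum μ v hn (a + b) = (a : ℝ) - μ * b := by
    rw [psum_n μ v hn, hA, hcB]
  have hT : 0 ≤ psum μ v hn (a + b) := by rw [hTval]; linarith
  set K : ℕ := (⌊(a : ℝ) - μ * b⌋).toNat with hKdef
  have hfl : 0 ≤ ⌊(a : ℝ) - μ * b⌋ := Int.le_floor.mpr (by push_cast; linarith)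
  have hKfl : (K : ℤ) = ⌊(a : ℝ) - μ * b⌋ := Int.toNat_of_nonneg hfl
  have hKT : (K : ℝ) ≤ psum μ v hn (a + b) := by
    rw [hTval]
    have h1 : ((K : ℤ) : ℝ) ≤ (a : ℝ) - μ * b := by
      rw [hKfl]; exact Int.floor_le _
    exact_mod_cast h1
  have hKn : K < a + b := by
    have hμb : 0 < μ * b := mul_pos hμ (by exact_mod_cast hb)
    have h1 : (K : ℝ) < (a : ℝ) := by rw [hTval] at hKT; linarith
    have h2 : K < a := by exact_mod_cast h1
    omega
  have hfloor1 : (⌊(a : ℝ) - μ * b + 1⌋ : ℤ) = (K : ℤ) + 1 := by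
    rw [show ((a : ℝ) - μ * b + 1) = ((a : ℝ) - μ * b) + (1 : ℤ) by push_cast; ring,
      Int.floor_add_intCast, ← hKfl]
  rw [hfloor1]
  have hgoal : (K : ℤ) + 1 = ((K + 1 : ℕ) : ℤ) := by push_cast; ring
  rw [hgoal, Int.ofNat_le]
  calc K + 1 = (Finset.range (K + 1)).card := (Finset.card_range _).symm
    _ ≤ _ := by
        apply Finset.card_le_card_of_injOn (fun c => mseq μ v hn c % (a + b))
        · intro c _
          simp only [Finset.mem_coe, Finset.mem_filter, Finset.mem_range]
          refine ⟨Nat.mod_lt _ hn, fun r hr1 hr2 => ?_⟩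
          have hgood := good_residue μ v hn (mseq μ v hn c) (mseq_fm μ v hn hT c) r
          have hcs := count_sum μ v hn (mseq μ v hn c % (a + b)) r hr2
          linarith
        · have key : ∀ c c', c' ≤ K → c < c' →
              mseq μ v hn c % (a + b) ≠ mseq μ v hn c' % (a + b) := by
            intro c c' hc'K hlt heq
            have hmono : mseq μ v hn c < mseq μ v hn c' := mseq_strictMono μ v hn hlt
            have hwin := mseq_window μ hμ v hn hT K hKT hKn c' hc'K
            have hge : mseq μ v hn 0 ≤ mseq μ v hn c :=
              (mseq_strictMono μ v hn).monotone (Nat.zero_le c)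
            have hdvd : (a + b) ∣ mseq μ v hn c' - mseq μ v hn c :=
              (Nat.modEq_iff_dvd' (le_of_lt hmono)).mp heq
            have := Nat.le_of_dvd (by omega) hdvd
            omega
          intro c hc c' hc' heq
          simp only [Finset.coe_range, Set.mem_Iio] at hc hc'
          rcases lt_trichotomy c c' with h | h | h
          · exact absurd heq (key c c' (by omega) h)
          · exact h
          · exact absurd heq.symm (key c' c (by omega) h)
end

section
/- Let μ be a positive real number and a, b positive integers with a > μb. For any fixed sequence of a votes for A and b votes for B, at least a - ⌊μb⌋ of its a+b cyclic permutations satisfy a_r > μ·b_r for all r. -/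
noncomputable def hmin (n : ℕ) (hn : 0 < n) (g : ℕ → ℝ) (i : ℕ) : ℝ :=
  (Finset.Icc (i+1) (i+n)).inf' (Finset.nonempty_Icc.mpr (by omega)) g

theorem hmin_le (n : ℕ) (hn : 0 < n) (g : ℕ → ℝ) (i j : ℕ) (h1 : i < j) (h2 : j ≤ i + n) :
    hmin n hn g i ≤ g j :=
  Finset.inf'_le _ (Finset.mem_Icc.mpr ⟨h1, h2⟩)

theorem hmin_mem (n : ℕ) (hn : 0 < n) (g : ℕ → ℝ) (i : ℕ) :
    ∃ j, i < j ∧ j ≤ i + n ∧ hmin n hn g i = g j := by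
  obtain ⟨j, hj, he⟩ := Finset.exists_mem_eq_inf'
    (s := Finset.Icc (i+1) (i+n)) (Finset.nonempty_Icc.mpr (by omega)) g
  rw [Finset.mem_Icc] at hj
  exact ⟨j, by omega, by omega, he⟩

theorem hmin_rec (n : ℕ) (hn : 0 < n) (g : ℕ → ℝ) (d : ℝ) (hd : 0 < d)
    (hper : ∀ r, g (r + n) = g r + d) (i : ℕ) :
    hmin n hn g i = min (g (i+1)) (hmin n hn g (i+1)) := by
  apply le_antisymm
  · apply le_min (hmin_le n hn g i (i+1) (by omega) (by omega))
    obtain ⟨j, hj1, hj2, hj3⟩ := hmin_mem n hn g (i+1)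
    rw [hj3]
    rcases Nat.lt_or_ge j (i+1+n) with h | h
    · exact hmin_le n hn g i j (by omega) (by omega)
    · have : j = i+1+n := by omega
      subst this
      have h1 : hmin n hn g i ≤ g (i+1) := hmin_le n hn g i (i+1) (by omega) (by omega)
      rw [show i+1+n = (i+1)+n from rfl, hper (i+1)]
      linarith
  · obtain ⟨j, hj1, hj2, hj3⟩ := hmin_mem n hn g i
    rw [hj3]
    rcases Nat.eq_or_lt_of_le hj1 with h | h
    · exact le_trans (min_le_left _ _) (le_of_eq (by rw [← h]))
    · exact le_trans (min_le_right _ _) (hmin_le n hn g (i+1) j (by omega) (by omega))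

theorem hmin_per (n : ℕ) (hn : 0 < n) (g : ℕ → ℝ) (d : ℝ)
    (hper : ∀ r, g (r + n) = g r + d) (i : ℕ) :
    hmin n hn g (i + n) = hmin n hn g i + d := by
  apply le_antisymm
  · obtain ⟨j, hj1, hj2, hj3⟩ := hmin_mem n hn g i
    have h := hmin_le n hn g (i+n) (j+n) (by omega) (by omega)
    rw [hper j] at h
    rw [hj3]
    exact h
  · obtain ⟨j, hj1, hj2, hj3⟩ := hmin_mem n hn g (i+n)
    have h4 : hmin n hn g i ≤ g (j - n) := hmin_le n hn g i (j-n) (by omega) (by omega)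
    have h5 : g (j - n + n) = g (j-n) + d := hper _
    rw [show j - n + n = j from by omega] at h5
    rw [hj3, h5]
    linarith

open Classical in
theorem abstract_cycle (n : ℕ) (hn : 0 < n) (g : ℕ → ℝ) (d : ℝ) (hd : 0 < d)
    (hper : ∀ r, g (r + n) = g r + d)
    (hstep : ∀ r, g (r + 1) ≤ g r + 1) :
    d ≤ ((Finset.range n).filter (fun i => ∀ j, i < j → j ≤ i + n → g i < g j)).card := by
  set Good : ℕ → Prop := fun i => ∀ j, i < j → j ≤ i + n → g i < g j with hGood
  have good_iff : ∀ i, Good i ↔ g i < hmin n hn g i := by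
    intro i
    constructor
    · intro h
      obtain ⟨j, hj1, hj2, hj3⟩ := hmin_mem n hn g i
      rw [hj3]; exact h j hj1 hj2
    · intro h j hj1 hj2
      exact lt_of_lt_of_le h (hmin_le n hn g i j hj1 hj2)
  have jump : ∀ i, hmin n hn g (i+1) - hmin n hn g i ≤ if Good (i+1) then (1:ℝ) else 0 := by
    intro i
    have hrec := hmin_rec n hn g d hd hper i
    by_cases hg : Good (i+1)
    · rw [if_pos hg]
      have h1 : hmin n hn g i = g (i+1) := by
        rw [hrec, min_eq_left]
        exact le_of_lt ((good_iff (i+1)).mp hg)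
      have h2 : hmin n hn g (i+1) ≤ g (i+1+1) := hmin_le n hn g (i+1) (i+1+1) (by omega) (by omega)
      have h3 := hstep (i+1)
      rw [h1]; linarith
    · rw [if_neg hg]
      have h1 : hmin n hn g i = hmin n hn g (i+1) := by
        rw [hrec, min_eq_right]
        rw [good_iff] at hg
        push_neg at hg
        exact hg
      linarith
  have tel : hmin n hn g n - hmin n hn g 0
      = ∑ i ∈ Finset.range n, (hmin n hn g (i+1) - hmin n hn g i) := by
    rw [Finset.sum_range_sub (fun i => hmin n hn g i)]
  have hdn : hmin n hn g n = hmin n hn g 0 + d := by simpa using hmin_per n hn g d hper 0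
  have key : d ≤ ∑ i ∈ Finset.range n, (if Good (i+1) then (1:ℝ) else 0) := by
    calc d = hmin n hn g n - hmin n hn g 0 := by rw [hdn]; ring
    _ = ∑ i ∈ Finset.range n, (hmin n hn g (i+1) - hmin n hn g i) := tel
    _ ≤ ∑ i ∈ Finset.range n, (if Good (i+1) then (1:ℝ) else 0) :=
        Finset.sum_le_sum (fun i _ => jump i)
  have hper_good : Good n ↔ Good 0 := by
    constructor
    · intro h j hj1 hj2
      have h2 := h (j + n) (by omega) (by omega)
      rw [hper j] at h2
      have e0 : g n = g 0 + d := by simpa using hper 0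
      linarith
    · intro h j hj1 hj2
      have h2 := h (j - n) (by omega) (by omega)
      have e : g (j - n + n) = g (j - n) + d := hper _
      rw [show j - n + n = j from by omega] at e
      have e0 : g n = g 0 + d := by simpa using hper 0
      linarith
  have shift : ∑ i ∈ Finset.range n, (if Good (i+1) then (1:ℝ) else 0)
      = ∑ i ∈ Finset.range n, (if Good i then (1:ℝ) else 0) := by
    have h1 : ∑ i ∈ Finset.range (n+1), (if Good i then (1:ℝ) else 0)
        = (∑ i ∈ Finset.range n, (if Good (i+1) then (1:ℝ) else 0))
          + (if Good 0 then (1:ℝ) else 0) :=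
      Finset.sum_range_succ' _ n
    have h2 : ∑ i ∈ Finset.range (n+1), (if Good i then (1:ℝ) else 0)
        = (∑ i ∈ Finset.range n, (if Good i then (1:ℝ) else 0))
          + (if Good n then (1:ℝ) else 0) :=
      Finset.sum_range_succ _ n
    have h3 : (if Good n then (1:ℝ) else 0) = (if Good 0 then (1:ℝ) else 0) := by
      simp only [hper_good]
    rw [h3] at h2
    linarith
  rw [shift] at key
  calc d ≤ ∑ i ∈ Finset.range n, (if Good i then (1:ℝ) else 0) := key
  _ = (((Finset.range n).filter (fun i => Good i)).card : ℝ) := by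
      rw [Finset.sum_boole]

open Classical in
theorem cyclic_helper (μ : ℝ) (a b n : ℕ) (hne : n = a + b) (hμ : 0 < μ) (ha : 0 < a)
    (hb : 0 < b) (hab : μ * b < a) (v : Fin n → Bool) (hA : countA n v n = a) :
    (a : ℤ) - ⌊μ * (b : ℝ)⌋ ≤
      ((Finset.range n).filter (fun i =>
        ∀ r, 1 ≤ r → r ≤ n →
          μ * (countB n (cyc v i) r : ℝ) < (countA n (cyc v i) r : ℝ))).card := by
  have hn : 0 < n := by omega
  set vv : ℕ → Bool := fun j => v ⟨j % n, Nat.mod_lt _ hn⟩ with hvv_def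
  set w : ℕ → ℝ := fun j => if vv j then 1 else -μ with hw_def
  set g : ℕ → ℝ := fun r => ∑ j ∈ Finset.range r, w j with hg_def
  set d : ℝ := (a : ℝ) - μ * b with hd_def
  have hd : 0 < d := by rw [hd_def]; linarith
  have countA_eq : ∀ (u : Fin n → Bool) (r : ℕ),
      countA n u r = ((Finset.range n).filter
        (fun j => j < r ∧ u ⟨j % n, Nat.mod_lt _ hn⟩ = true)).card := by
    intro u r
    unfold countA
    rw [Finset.card_filter, Finset.card_filter,
      ← Fin.sum_univ_eq_sum_range
        (fun j => if j < r ∧ u ⟨j % n, Nat.mod_lt _ hn⟩ = true then 1 else 0) n]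
    apply Finset.sum_congr rfl
    intro i _
    have he : (⟨i.val % n, Nat.mod_lt _ hn⟩ : Fin n) = i := Fin.ext (Nat.mod_eq_of_lt i.isLt)
    simp only [he]
  have countB_eq : ∀ (u : Fin n → Bool) (r : ℕ),
      countB n u r = ((Finset.range n).filter
        (fun j => j < r ∧ u ⟨j % n, Nat.mod_lt _ hn⟩ = false)).card := by
    intro u r
    unfold countB
    rw [Finset.card_filter, Finset.card_filter,
      ← Fin.sum_univ_eq_sum_range
        (fun j => if j < r ∧ u ⟨j % n, Nat.mod_lt _ hn⟩ = false then 1 else 0) n]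
    apply Finset.sum_congr rfl
    intro i _
    have he : (⟨i.val % n, Nat.mod_lt _ hn⟩ : Fin n) = i := Fin.ext (Nat.mod_eq_of_lt i.isLt)
    simp only [he]
  have cyc_eq : ∀ (i j : ℕ), (cyc v i) ⟨j % n, Nat.mod_lt _ hn⟩ = vv (i + j) := by
    intro i j
    show v _ = v _
    congr 1
    apply Fin.ext
    show (j % n + i) % n = (i + j) % n
    rw [Nat.add_comm i j]
    conv_rhs => rw [Nat.add_mod]
    rw [Nat.add_mod (j % n) i, Nat.mod_mod_of_dvd]
    exact dvd_refl n
  have countA_cyc : ∀ (i r : ℕ), r ≤ n →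
      countA n (cyc v i) r = ((Finset.range r).filter (fun j => vv (i + j) = true)).card := by
    intro i r hr
    rw [countA_eq]
    congr 1
    ext j
    simp only [Finset.mem_filter, Finset.mem_range, cyc_eq]
    constructor
    · rintro ⟨_, h1, h2⟩; exact ⟨h1, h2⟩
    · rintro ⟨h1, h2⟩; exact ⟨by omega, h1, h2⟩
  have countB_cyc : ∀ (i r : ℕ), r ≤ n →
      countB n (cyc v i) r = ((Finset.range r).filter (fun j => vv (i + j) = false)).card := by
    intro i r hr
    rw [countB_eq]
    congr 1
    ext j
    simp only [Finset.mem_filter, Finset.mem_range, cyc_eq]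
    constructor
    · rintro ⟨_, h1, h2⟩; exact ⟨h1, h2⟩
    · rintro ⟨h1, h2⟩; exact ⟨by omega, h1, h2⟩
  have gdiff : ∀ (i r : ℕ), r ≤ n →
      g (i + r) - g i = (countA n (cyc v i) r : ℝ) - μ * (countB n (cyc v i) r : ℝ) := by
    intro i r hr
    have h1 : g (i + r) - g i = ∑ j ∈ Finset.range r, w (i + j) := by
      simp only [hg_def]
      rw [Finset.sum_range_add, add_sub_cancel_left]
    have h2 : ∀ j, w (i + j)
        = (if vv (i+j) = true then (1:ℝ) else 0) + (-μ) * (if vv (i+j) = false then (1:ℝ) else 0) := by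
      intro j
      simp only [hw_def]
      by_cases h : vv (i + j) <;> simp [h]
    rw [h1]
    rw [Finset.sum_congr rfl (fun j _ => h2 j)]
    rw [Finset.sum_add_distrib, ← Finset.mul_sum, Finset.sum_boole, Finset.sum_boole,
      countA_cyc i r hr, countB_cyc i r hr]
    push_cast
    ring
  have vv_per : ∀ j, vv (j + n) = vv j := by
    intro j
    simp only [hvv_def]
    congr 1
    exact Fin.ext (Nat.add_mod_right j n)
  have cyc0 : cyc v 0 = v := by
    funext j
    show v _ = v _
    congr 1
    exact Fin.ext (by simp [Nat.mod_eq_of_lt j.isLt])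
  have cAB : countA n v n + countB n v n = n := by
    unfold countA countB
    have e : (Finset.univ.filter (fun i : Fin n => i.val < n ∧ v i = false))
        = Finset.univ.filter (fun i : Fin n => ¬(i.val < n ∧ v i = true)) := by
      ext i
      simp [i.isLt]
    rw [e, Finset.card_filter_add_card_filter_not, Finset.card_univ, Fintype.card_fin]
  have hB : countB n v n = b := by omega
  have g0 : g 0 = 0 := by simp [hg_def]
  have gn : g n = d := by
    have := gdiff 0 n (le_refl n)
    rw [Nat.zero_add, cyc0, hA, hB, g0] at this
    rw [hd_def]
    linarith
  have hper : ∀ r, g (r + n) = g r + d := by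
    intro r
    induction r with
    | zero => rw [Nat.zero_add, g0, gn, zero_add]
    | succ r ih =>
      have e1 : g (r + 1 + n) = g (r + n) + w (r + n) := by
        rw [show r + 1 + n = (r + n) + 1 from by omega]
        simp only [hg_def]
        rw [Finset.sum_range_succ]
      have e2 : g (r + 1) = g r + w r := by
        simp only [hg_def]
        rw [Finset.sum_range_succ]
      have e3 : w (r + n) = w r := by
        simp only [hw_def, vv_per r]
      rw [e1, e2, e3, ih]
      ring
  have hstep : ∀ r, g (r + 1) ≤ g r + 1 := by
    intro r
    have e2 : g (r + 1) = g r + w r := by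
      simp only [hg_def]
      rw [Finset.sum_range_succ]
    rw [e2]
    have : w r ≤ 1 := by
      simp only [hw_def]
      by_cases h : vv r <;> simp [h] <;> linarith
    linarith
  have key := abstract_cycle n hn g d hd hper hstep
  -- identify the filters
  have feq : ((Finset.range n).filter (fun i => ∀ j, i < j → j ≤ i + n → g i < g j))
      = ((Finset.range n).filter (fun i =>
          ∀ r, 1 ≤ r → r ≤ n →
            μ * (countB n (cyc v i) r : ℝ) < (countA n (cyc v i) r : ℝ))) := by
    ext i
    simp only [Finset.mem_filter, Finset.mem_range]
    constructor
    · rintro ⟨h0, h⟩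
      refine ⟨h0, fun r h1 h2 => ?_⟩
      have := h (i + r) (by omega) (by omega)
      have hg2 := gdiff i r h2
      linarith
    · rintro ⟨h0, h⟩
      refine ⟨h0, fun j hj1 hj2 => ?_⟩
      have h1 := h (j - i) (by omega) (by omega)
      have hg2 := gdiff i (j - i) (by omega)
      rw [show i + (j - i) = j from by omega] at hg2
      linarith
  rw [feq] at key
  -- final arithmetic
  set c : ℕ := ((Finset.range n).filter (fun i =>
          ∀ r, 1 ≤ r → r ≤ n →
            μ * (countB n (cyc v i) r : ℝ) < (countA n (cyc v i) r : ℝ))).card with hc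
  have hfl : (a : ℤ) - (c : ℤ) ≤ ⌊μ * (b : ℝ)⌋ := by
    rw [Int.le_floor]
    push_cast
    rw [hd_def] at key
    linarith
  omega

open Classical in
theorem cyclic_strict_count (μ : ℝ) (a b : ℕ) (hμ : 0 < μ) (ha : 0 < a) (hb : 0 < b)
    (hab : μ * b < a) (v : Fin (a + b) → Bool) (hA : countA (a + b) v (a + b) = a) :
    (a : ℤ) - ⌊μ * (b : ℝ)⌋ ≤
      ((Finset.range (a + b)).filter (fun i =>
        ∀ r, 1 ≤ r → r ≤ a + b →
          μ * (countB (a + b) (cyc v i) r : ℝ) < (countA (a + b) (cyc v i) r : ℝ))).card := by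
  exact cyclic_helper μ a b (a + b) rfl hμ ha hb hab v hA
end

section
/- Let μ > 0 be real and consider a sequence of a+b votes with partial sums S_r = a_r - μ·b_r and S_{a+b} ≥ 0. If i is an index at which S_i is minimal, then the cyclic permutation moving the first i votes to the end satisfies S'_r ≥ 0 for all r, where S' is the weighted partial sum of the new sequence. -/
/-- weight function -/
noncomputable def wgt (μ : ℝ) (n : ℕ) (v : Fin n → Bool) (j : ℕ) : ℝ :=
  if h : j < n then (if v ⟨j, h⟩ then (1:ℝ) else -μ) else 0

lemma count_eq_sum (μ : ℝ) (n : ℕ) (v : Fin n → Bool) (r : ℕ) (hr : r ≤ n) :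
    (countA n v r : ℝ) - μ * (countB n v r : ℝ) = ∑ j ∈ Finset.range r, wgt μ n v j := by
  have hA : (countA n v r : ℝ) = ∑ j : Fin n, (if j.val < r ∧ v j = true then (1:ℝ) else 0) := by
    rw [countA, Finset.card_filter]
    push_cast
    rfl
  have hB : (countB n v r : ℝ) = ∑ j : Fin n, (if j.val < r ∧ v j = false then (1:ℝ) else 0) := by
    rw [countB, Finset.card_filter]
    push_cast
    rfl
  rw [hA, hB, Finset.mul_sum, ← Finset.sum_sub_distrib]
  have step : ∀ j : Fin n,
      (if j.val < r ∧ v j = true then (1:ℝ) else 0) - μ * (if j.val < r ∧ v j = false then (1:ℝ) else 0)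
        = if j.val < r then wgt μ n v j.val else 0 := by
    intro j
    simp only [wgt, j.isLt, dif_pos, Fin.eta]
    by_cases h : j.val < r <;> cases hv : v j <;> simp [h, hv]
  rw [Finset.sum_congr rfl fun j _ => step j]
  rw [Fin.sum_univ_eq_sum_range (fun j => if j < r then wgt μ n v j else 0) n]
  rw [← Finset.sum_subset (Finset.range_subset_range.2 hr) (by intro x hx hx'; simp at hx'; simp [hx'])]
  exact Finset.sum_congr rfl (by intro x hx; simp at hx; simp [hx])

theorem shift_at_min_is_cute (μ : ℝ) (a b : ℕ) (hμ : 0 < μ)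
    (v : Fin (a + b) → Bool) (hA : countA (a + b) v (a + b) = a)
    (hB : countB (a + b) v (a + b) = b)
    (hend : 0 ≤ (countA (a + b) v (a + b) : ℝ) - μ * (countB (a + b) v (a + b) : ℝ))
    (i : ℕ) (hi : i ≤ a + b)
    (hmin : ∀ r, r ≤ a + b →
      (countA (a + b) v i : ℝ) - μ * (countB (a + b) v i : ℝ) ≤
        (countA (a + b) v r : ℝ) - μ * (countB (a + b) v r : ℝ)) :
    ∀ r, r ≤ a + b →
      0 ≤ (countA (a + b) (cyc v i) r : ℝ) - μ * (countB (a + b) (cyc v i) r : ℝ) := by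
  intro r hr
  rcases Nat.eq_zero_or_pos (a + b) with h0 | hpos
  · have : r = 0 := by omega
    subst this
    simp [countA, countB]
  set! n := a + b with hn
  have hi' : i ≤ n := hi
  have hr' : r ≤ n := hr
  set! F : ℕ → ℝ := wgt μ n v with hF
  set! S : ℕ → ℝ := fun r => ∑ j ∈ Finset.range r, F j with hS
  have hmin' : ∀ s, s ≤ n → S i ≤ S s := by
    intro s hs
    have := hmin s hs
    rwa [count_eq_sum μ n v i hi, count_eq_sum μ n v s hs] at this
  have hend' : 0 ≤ S n := by
    rwa [count_eq_sum μ n v n le_rfl] at hend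
  rw [count_eq_sum μ n (cyc v i) r hr]
  have hcyc : ∀ j, j < n → wgt μ n (cyc v i) j = F ((j + i) % n) := by
    intro j hj
    have hjm : (j + i) % n < n := Nat.mod_lt _ hpos
    simp only [wgt, hF, dif_pos hj, dif_pos hjm, cyc]
    rfl
  by_cases hcase : r + i ≤ n
  · -- no wraparound
    have heq : ∑ j ∈ Finset.range r, wgt μ n (cyc v i) j = S (i + r) - S i := by
      simp only [hS]
      rw [Finset.sum_range_add F i r]
      have : ∀ j ∈ Finset.range r, wgt μ n (cyc v i) j = F (i + j) := by
        intro j hj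
        simp only [Finset.mem_range] at hj
        rw [hcyc j (by omega), Nat.mod_eq_of_lt (by omega), Nat.add_comm]
      rw [Finset.sum_congr rfl this]
      ring
    rw [heq]
    have := hmin' (i + r) (by omega)
    linarith
  · -- wraparound
    push_neg at hcase
    have hk : n - i ≤ r := by omega
    have hik : i + (n - i) = n := by omega
    obtain ⟨t, ht⟩ : ∃ t, r = (n - i) + t := ⟨r - (n - i), by omega⟩
    have hti : t ≤ i := by omega
    subst ht
    rw [Finset.sum_range_add]
    have h1 : ∑ j ∈ Finset.range (n - i), wgt μ n (cyc v i) j = S n - S i := by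
      have : ∀ j ∈ Finset.range (n - i), wgt μ n (cyc v i) j = F (i + j) := by
        intro j hj
        simp only [Finset.mem_range] at hj
        rw [hcyc j (by omega), Nat.mod_eq_of_lt (by omega), Nat.add_comm]
      rw [Finset.sum_congr rfl this]
      have := Finset.sum_range_add F i (n - i)
      rw [hik] at this
      simp only [hS]
      rw [this]; ring
    have h2 : ∑ j ∈ Finset.range t, wgt μ n (cyc v i) (n - i + j) = S t := by
      apply Finset.sum_congr rfl
      intro j hj
      simp only [Finset.mem_range] at hj
      rw [hcyc (n - i + j) (by omega)]
      have : (n - i + j + i) % n = j := by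
        have : n - i + j + i = n + j := by omega
        rw [this, Nat.add_mod_left, Nat.mod_eq_of_lt (by omega)]
      rw [this]
    rw [h1, h2]
    have := hmin' t (by omega)
    linarith
end

section
/- Let μ > 0 be real and suppose a sequence of a+b votes satisfies S'_r ≥ 0 for all r (where S'_r = a_r - μ·b_r). If r is an index such that S'_r ≤ S'_t for all t with r+1 ≤ t ≤ a+b, then the cyclic permutation of the sequence beginning with the (r+1)-th term also has all weighted partial sums nonnegative. -/
/-- Count of votes equal to `c` among positions in `[p, q)`. -/
def cnt (n : ℕ) (v : Fin n → Bool) (c : Bool) (p q : ℕ) : ℕ :=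
  (Finset.univ.filter (fun i : Fin n => p ≤ i.val ∧ i.val < q ∧ v i = c)).card

lemma countA_eq (n : ℕ) (v : Fin n → Bool) (r : ℕ) :
    countA n v r = cnt n v true 0 r := by
  unfold countA cnt
  congr 1
  ext i
  simp

lemma countB_eq (n : ℕ) (v : Fin n → Bool) (r : ℕ) :
    countB n v r = cnt n v false 0 r := by
  unfold countB cnt
  congr 1
  ext i
  simp

lemma cnt_add (n : ℕ) (v : Fin n → Bool) (c : Bool) {p q : ℕ} (h : p ≤ q) :
    cnt n v c 0 q = cnt n v c 0 p + cnt n v c p q := by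
  unfold cnt
  rw [← Finset.card_union_of_disjoint]
  · congr 1
    ext i
    simp only [Finset.mem_filter, Finset.mem_union, Finset.mem_univ, true_and]
    constructor
    · rintro ⟨h1, h2, h3⟩
      rcases lt_or_ge i.val p with h4 | h4
      · exact Or.inl ⟨h1, h4, h3⟩
      · exact Or.inr ⟨h4, h2, h3⟩
    · rintro (⟨h1, h2, h3⟩ | ⟨h1, h2, h3⟩)
      · exact ⟨h1, lt_of_lt_of_le h2 h, h3⟩
      · exact ⟨Nat.zero_le _, h2, h3⟩
  · rw [Finset.disjoint_left]
    intro i hi hi'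
    simp only [Finset.mem_filter] at hi hi'
    omega

lemma cnt_cyc_low (n : ℕ) (v : Fin n → Bool) (c : Bool) (r j : ℕ) (h : r + j ≤ n) :
    cnt n (cyc v r) c 0 j = cnt n v c r (r + j) := by
  unfold cnt
  apply Finset.card_bij (fun (i : Fin n) _ =>
    (⟨(i.val + r) % n, Nat.mod_lt _ (Nat.lt_of_le_of_lt (Nat.zero_le i.val) i.isLt)⟩ : Fin n))
  · intro i hi
    simp only [Finset.mem_filter, Finset.mem_univ, true_and] at hi ⊢
    have hlt : i.val + r < n := by omega
    have hm : (i.val + r) % n = i.val + r := Nat.mod_eq_of_lt hlt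
    refine ⟨by omega, by omega, ?_⟩
    have : cyc v r i = c := hi.2.2
    unfold cyc at this
    exact this
  · intro i hi i' hi' heq
    simp only [Finset.mem_filter, Finset.mem_univ, true_and] at hi hi'
    have h1 : (i.val + r) % n = i.val + r := Nat.mod_eq_of_lt (by omega)
    have h2 : (i'.val + r) % n = i'.val + r := Nat.mod_eq_of_lt (by omega)
    have := congrArg Fin.val heq
    simp only [h1, h2] at this
    exact Fin.ext (by omega)
  · intro k hk
    simp only [Finset.mem_filter, Finset.mem_univ, true_and] at hk
    obtain ⟨hk1, hk2, hk3⟩ := hk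
    have hklt : k.val < n := k.isLt
    refine ⟨⟨k.val - r, by omega⟩, ?_, ?_⟩
    · simp only [Finset.mem_filter, Finset.mem_univ, true_and]
      refine ⟨Nat.zero_le _, by omega, ?_⟩
      unfold cyc
      have : (k.val - r + r) % n = k.val := by
        rw [Nat.sub_add_cancel hk1, Nat.mod_eq_of_lt hklt]
      convert hk3 using 2
      exact Fin.ext this
    · apply Fin.ext
      simp only
      rw [Nat.sub_add_cancel hk1, Nat.mod_eq_of_lt hklt]

lemma cnt_cyc_high (n : ℕ) (v : Fin n → Bool) (c : Bool) (r j : ℕ)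
    (hr : r ≤ n) (h : n ≤ r + j) (hj : j ≤ n) :
    cnt n (cyc v r) c (n - r) j = cnt n v c 0 (r + j - n) := by
  unfold cnt
  apply Finset.card_bij (fun (i : Fin n) _ =>
    (⟨(i.val + r) % n, Nat.mod_lt _ (Nat.lt_of_le_of_lt (Nat.zero_le i.val) i.isLt)⟩ : Fin n))
  · intro i hi
    simp only [Finset.mem_filter, Finset.mem_univ, true_and] at hi ⊢
    obtain ⟨h1, h2, h3⟩ := hi
    have hge : n ≤ i.val + r := by omega
    have hlt2 : i.val + r < 2 * n := by omega
    have hm : (i.val + r) % n = i.val + r - n := by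
      rw [Nat.mod_eq_sub_mod hge, Nat.mod_eq_of_lt (by omega)]
    refine ⟨Nat.zero_le _, by omega, ?_⟩
    unfold cyc at h3
    exact h3
  · intro i hi i' hi' heq
    simp only [Finset.mem_filter, Finset.mem_univ, true_and] at hi hi'
    have hm1 : (i.val + r) % n = i.val + r - n := by
      rw [Nat.mod_eq_sub_mod (by omega), Nat.mod_eq_of_lt (by omega)]
    have hm2 : (i'.val + r) % n = i'.val + r - n := by
      rw [Nat.mod_eq_sub_mod (by omega), Nat.mod_eq_of_lt (by omega)]
    have := congrArg Fin.val heq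
    simp only [hm1, hm2] at this
    exact Fin.ext (by omega)
  · intro k hk
    simp only [Finset.mem_filter, Finset.mem_univ, true_and] at hk
    obtain ⟨_, hk2, hk3⟩ := hk
    have hklt : k.val < n := k.isLt
    refine ⟨⟨k.val + n - r, by omega⟩, ?_, ?_⟩
    · simp only [Finset.mem_filter, Finset.mem_univ, true_and]
      refine ⟨by omega, by omega, ?_⟩
      unfold cyc
      have hm : (k.val + n - r + r) % n = k.val := by
        have : k.val + n - r + r = k.val + n := by omega
        rw [this, Nat.add_mod_right, Nat.mod_eq_of_lt hklt]
      convert hk3 using 2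
      exact Fin.ext hm
    · apply Fin.ext
      simp only
      have : k.val + n - r + r = k.val + n := by omega
      rw [this, Nat.add_mod_right, Nat.mod_eq_of_lt hklt]

theorem shift_at_cute_index_is_cute (μ : ℝ) (a b : ℕ) (hμ : 0 < μ)
    (v : Fin (a + b) → Bool) (hA : countA (a + b) v (a + b) = a)
    (hB : countB (a + b) v (a + b) = b)
    (hcute : ∀ r, r ≤ a + b →
      0 ≤ (countA (a + b) v r : ℝ) - μ * (countB (a + b) v r : ℝ))
    (r : ℕ) (hr : r ≤ a + b)
    (hmin : ∀ t, r + 1 ≤ t → t ≤ a + b →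
      (countA (a + b) v r : ℝ) - μ * (countB (a + b) v r : ℝ) ≤
        (countA (a + b) v t : ℝ) - μ * (countB (a + b) v t : ℝ)) :
    ∀ j, j ≤ a + b →
      0 ≤ (countA (a + b) (cyc v r) j : ℝ) - μ * (countB (a + b) (cyc v r) j : ℝ) := by
  intro j hj
  rcases Nat.eq_zero_or_pos j with rfl | hj0
  · have hA0 : countA (a + b) (cyc v r) 0 = 0 := by simp [countA]
    have hB0 : countB (a + b) (cyc v r) 0 = 0 := by simp [countB]
    rw [hA0, hB0]
    norm_num
  by_cases h1 : r + j ≤ (a + b)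
  · -- no wraparound
    have hAsum : countA (a + b) v (r + j) = countA (a + b) v r + cnt (a + b) v true r (r + j) := by
      rw [countA_eq, countA_eq, cnt_add (a + b) v true (Nat.le_add_right r j)]
    have hBsum : countB (a + b) v (r + j) = countB (a + b) v r + cnt (a + b) v false r (r + j) := by
      rw [countB_eq, countB_eq, cnt_add (a + b) v false (Nat.le_add_right r j)]
    have hcA : countA (a + b) (cyc v r) j = cnt (a + b) v true r (r + j) := by
      rw [countA_eq, cnt_cyc_low (a + b) v true r j h1]
    have hcB : countB (a + b) (cyc v r) j = cnt (a + b) v false r (r + j) := by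
      rw [countB_eq, cnt_cyc_low (a + b) v false r j h1]
    have hmin' := hmin (r + j) (by omega) h1
    rw [hcA, hcB]
    have eA : (cnt (a + b) v true r (r + j) : ℝ) = (countA (a + b) v (r + j) : ℝ) - countA (a + b) v r := by
      rw [hAsum]; push_cast; ring
    have eB : (cnt (a + b) v false r (r + j) : ℝ) = (countB (a + b) v (r + j) : ℝ) - countB (a + b) v r := by
      rw [hBsum]; push_cast; ring
    rw [eA, eB]
    linarith
  · -- wraparound
    have h2 : (a + b) ≤ r + j := le_of_not_ge h1
    have hs : r + j - (a + b) ≤ (a + b) := by omega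
    have hnr : (a + b) - r ≤ j := by omega
    have hcA : countA (a + b) (cyc v r) j
        = cnt (a + b) v true r (a + b) + countA (a + b) v (r + j - (a + b)) := by
      rw [countA_eq, cnt_add (a + b) (cyc v r) true hnr,
        cnt_cyc_low (a + b) v true r ((a + b) - r) (by omega),
        cnt_cyc_high (a + b) v true r j hr h2 hj, countA_eq]
      congr 2
      omega
    have hcB : countB (a + b) (cyc v r) j
        = cnt (a + b) v false r (a + b) + countB (a + b) v (r + j - (a + b)) := by
      rw [countB_eq, cnt_add (a + b) (cyc v r) false hnr,
        cnt_cyc_low (a + b) v false r ((a + b) - r) (by omega),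
        cnt_cyc_high (a + b) v false r j hr h2 hj, countB_eq]
      congr 2
      omega
    have hAsum : countA (a + b) v (a + b) = countA (a + b) v r + cnt (a + b) v true r (a + b) := by
      rw [countA_eq, countA_eq, cnt_add (a + b) v true hr]
    have hBsum : countB (a + b) v (a + b) = countB (a + b) v r + cnt (a + b) v false r (a + b) := by
      rw [countB_eq, countB_eq, cnt_add (a + b) v false hr]
    have hc1 := hcute (r + j - (a + b)) hs
    rw [hcA, hcB]
    have eA : (cnt (a + b) v true r (a + b) : ℝ) = (countA (a + b) v (a + b) : ℝ) - countA (a + b) v r := by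
      rw [hAsum]; push_cast; ring
    have eB : (cnt (a + b) v false r (a + b) : ℝ) = (countB (a + b) v (a + b) : ℝ) - countB (a + b) v r := by
      rw [hBsum]; push_cast; ring
    push_cast
    rw [eA, eB]
    rcases Nat.lt_or_ge r (a + b) with hrn | hrn
    · have hmin' := hmin (a + b) (by omega) le_rfl
      linarith
    · have hreq : r = (a + b) := le_antisymm hr hrn
      have hz : ∀ c, cnt (a + b) v c r (a + b) = 0 := by
        intro c
        rw [hreq]
        simp only [cnt, Finset.card_eq_zero, Finset.filter_eq_empty_iff]
        intro i _
        omega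
      have hAr : countA (a + b) v (a + b) = countA (a + b) v r := by
        rw [hAsum, hz true, Nat.add_zero]
      have hBr : countB (a + b) v (a + b) = countB (a + b) v r := by
        rw [hBsum, hz false, Nat.add_zero]
      rw [hAr, hBr]
      linarith
end
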